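/- Let K be a type-determining subset of a centrally orthocomplete generalized pseudoeffect algebra E. Then there exist unique pairwise disjoint mappings π₁, π₂, π₃ in ΓEX(E), namely π₁ = γ_K̃, π₂ = γ_K ∧ (γ_K̃)′, and π₃ = (γ_K)′, such that: (i) π₁ ∨ π₂ ∨ π₃ = 1, so that E = π₁(E) ⊕ π₂(E) ⊕ π₃(E), and (ii) π₁ is type-K, π₂ is locally type-K but properly non-K, and π₃ is purely non-K. -/

import Mathlib

/- Common framework: generalized pseudoeffect algebras (GPEAs), after
   Foulis, Pulmannová, Vinceková, "The exocenter and type decompositions for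
   generalized pseudoeffect algebras".
   A partial binary operation ⊕ is represented by its graph
   `R : E → E → E → Prop`, where `R a b s` means "a ⊕ b is defined and equals s". -/

universe u v

namespace GPEApaper

/-- Raw data of a partial algebra: the graph of a partial binary operation
together with a zero element. -/
structure PartialAlg (E : Type u) where
  R : E → E → E → Prop
  zero : E

namespace PartialAlg

variable {E : Type u} (A : PartialAlg E)

/-- The axioms (GPEA1)–(GPEA5) of a generalized pseudoeffect algebra,
including the functionality (well-definedness) of the partial operation. -/
def IsGPEA : Prop :=
  -- ⊕ is a partial operation (single-valued)
  (∀ a b c d : E, A.R a b c → A.R a b d → c = d) ∧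
  -- (GPEA1) associativity, both directions
  (∀ a b c ab abc : E, A.R a b ab → A.R ab c abc → ∃ bc, A.R b c bc ∧ A.R a bc abc) ∧
  (∀ a b c bc abc : E, A.R b c bc → A.R a bc abc → ∃ ab, A.R a b ab ∧ A.R ab c abc) ∧
  -- (GPEA2) conjugacy
  (∀ a b s : E, A.R a b s → (∃ d, A.R d a s) ∧ (∃ e, A.R b e s)) ∧
  -- (GPEA3) cancellation
  (∀ a b c s : E, A.R a b s → A.R a c s → b = c) ∧
  (∀ a b c s : E, A.R b a s → A.R c a s → b = c) ∧
  -- (GPEA4) positivity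
  (∀ a b : E, A.R a b A.zero → a = A.zero ∧ b = A.zero) ∧
  -- (GPEA5) zero element
  (∀ a : E, A.R a A.zero a ∧ A.R A.zero a a)

/-- a ⊕ b is defined. -/
def Defined (a b : E) : Prop := ∃ s, A.R a b s

/-- The induced partial order: a ≤ b iff a ⊕ x = b for some x. -/
def le (a b : E) : Prop := ∃ x, A.R a x b

/-- Orthogonality: p ⊥ q iff p ⊕ q and q ⊕ p both exist and are equal. -/
def perp (a b : E) : Prop := ∃ s, A.R a b s ∧ A.R b a s

/-- b is an upper bound of the set S. -/
def IsUB (S : Set E) (b : E) : Prop := ∀ a ∈ S, A.le a b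

/-- s is the supremum (least upper bound) of the set S in (E, ≤). -/
def IsSup (S : Set E) (s : E) : Prop := A.IsUB S s ∧ ∀ b, A.IsUB S b → A.le s b

/-- s is the infimum (greatest lower bound) of the set S in (E, ≤). -/
def IsInf (S : Set E) (s : E) : Prop :=
  (∀ a ∈ S, A.le s a) ∧ ∀ b, (∀ a ∈ S, A.le b a) → A.le b s

/-- An ideal of a GPEA. -/
def IsIdeal (I : Set E) : Prop :=
  I.Nonempty ∧ (∀ a ∈ I, ∀ b, A.le b a → b ∈ I) ∧
    ∀ a ∈ I, ∀ b ∈ I, ∀ s, A.R a b s → s ∈ I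

/-- E = S ⊕ S′ : S and S′ are ideals, elements of S are orthogonal to elements
of S′, and every element of E has a unique decomposition a = a₁ ⊕ a₂ with
a₁ ∈ S, a₂ ∈ S′. -/
def IsDirectSum (S S' : Set E) : Prop :=
  A.IsIdeal S ∧ A.IsIdeal S' ∧ (∀ a ∈ S, ∀ b ∈ S', A.perp a b) ∧
    ∀ a : E, ∃! p : E × E, p.1 ∈ S ∧ p.2 ∈ S' ∧ A.R p.1 p.2 a

/-- A central ideal (direct summand). -/
def IsCentralIdeal (S : Set E) : Prop := ∃ S', A.IsDirectSum S S'

/-- A normal ideal. -/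
def IsNormalIdeal (I : Set E) : Prop :=
  A.IsIdeal I ∧ ∀ a x y s : E, A.R a x s → A.R y a s → (x ∈ I ↔ y ∈ I)

/-- The axioms (EXC1)–(EXC4): π belongs to the exocenter ΓEX(E). -/
def IsExo (π : E → E) : Prop :=
  (∀ e f s, A.R e f s → A.R (π e) (π f) (π s)) ∧
  (∀ e, π (π e) = π e) ∧
  (∀ e, A.le (π e) e) ∧
  (∀ e f, π e = e → π f = A.zero → A.perp e f)

/-- For a ≤ b, `A.rdiv a b` is the element a/b, i.e. the unique x with
a ⊕ x = b (chosen by Hilbert choice when it exists). -/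
noncomputable def rdiv (a b : E) : E :=
  letI : Nonempty E := ⟨A.zero⟩
  Classical.epsilon fun x => A.R a x b

/-- For π in the exocenter, π′ e := (π e)/e. -/
noncomputable def exoCompl (π : E → E) : E → E := fun e => A.rdiv (π e) e

/-- The order on the exocenter: ξ ≤ π iff ξ = ξ ∘ π. -/
def exoLe (_A : PartialAlg E) (ξ π : E → E) : Prop := ξ = ξ ∘ π

/-- Disjointness in the boolean algebra ΓEX(E): the meet (= composition)
of ξ and π is the zero map. -/
def exoDisjoint (ξ π : E → E) : Prop := ∀ e, ξ (π e) = A.zero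

/-- The join in the boolean algebra ΓEX(E): π ∨ ξ = (π′ ∘ ξ′)′. -/
noncomputable def exoSup (π ξ : E → E) : E → E :=
  A.exoCompl (A.exoCompl π ∘ A.exoCompl ξ)

/-- σ is the least upper bound of a set S of exocenter elements,
with respect to the order of the boolean algebra ΓEX(E). -/
def IsExoLUB (S : Set (E → E)) (σ : E → E) : Prop :=
  A.IsExo σ ∧ (∀ π ∈ S, A.exoLe π σ) ∧
    ∀ β, A.IsExo β → (∀ π ∈ S, A.exoLe π β) → A.exoLe σ β

/-- A central element (C1)–(C4). -/
def Central (c : E) : Prop :=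
  (∀ a : E, ∃ a₁ a₂, A.le a₁ c ∧ A.Defined a₂ c ∧ A.R a₁ a₂ a) ∧
  (∀ a b : E, A.le a c → A.Defined b c → A.perp a b) ∧
  (∀ a b s : E, A.le a c → A.le b c → A.R a b s → A.le s c) ∧
  (∀ a b ab : E, A.Defined a c → A.Defined b c → A.R a b ab → A.Defined ab c)

/-- `A.ListSumsTo [e₁, …, eₙ] s` : the orthosum e₁ ⊕ (e₂ ⊕ (⋯ ⊕ eₙ)) is
defined and equals s (empty orthosum is 0). -/
def ListSumsTo (A : PartialAlg E) : List E → E → Prop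
  | [], s => s = A.zero
  | a :: l, s => ∃ t, A.ListSumsTo l t ∧ A.R a t s

/-- The finite subfamily indexed by F is orthogonal with orthosum s:
every enumeration of F yields the orthosum s. -/
def FinsetSumsTo {ι : Type v} (e : ι → E) (F : Finset ι) (s : E) : Prop :=
  ∀ l : List ι, l.Nodup →
    (letI : DecidableEq ι := Classical.decEq ι; l.toFinset) = F →
    A.ListSumsTo (l.map e) s

/-- A family is orthogonal iff every finite subfamily is orthogonal
(all enumerations have a common orthosum). -/
def IsOrthogonal {ι : Type v} (e : ι → E) : Prop :=
  ∀ F : Finset ι, ∃ s, A.FinsetSumsTo e F s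

/-- A family is orthosummable with orthosum s iff it is orthogonal and s is
the supremum of its finite partial orthosums. -/
def IsOrthosum {ι : Type v} (e : ι → E) (s : E) : Prop :=
  A.IsOrthogonal e ∧ A.IsSup {t | ∃ F : Finset ι, A.FinsetSumsTo e F t} s

/-- A family (eᵢ) is ΓEX-orthogonal iff there is a pairwise disjoint family
(πᵢ) in the exocenter with πᵢ eᵢ = eᵢ for all i. -/
def GEXOrthogonal {ι : Type v} (e : ι → E) : Prop :=
  ∃ π : ι → E → E, (∀ i, A.IsExo (π i)) ∧
    (∀ i j, i ≠ j → A.exoDisjoint (π i) (π j)) ∧ ∀ i, π i (e i) = e i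

/-- E is centrally orthocomplete: (CO1) every ΓEX-orthogonal family is
orthosummable, and (CO2) orthosums respect one-sided summability. -/
def IsCOGPEA : Prop :=
  (∀ {ι : Type u} (e : ι → E), A.GEXOrthogonal e → ∃ s, A.IsOrthosum e s) ∧
  (∀ {ι : Type u} (e : ι → E) (s : E), A.GEXOrthogonal e → A.IsOrthosum e s →
    ∀ a : E, ((∀ i, A.Defined a (e i)) → A.Defined a s) ∧
             ((∀ i, A.Defined (e i) a) → A.Defined s a))

/-- γ is the exocentral cover of e: the smallest element of ΓEX(E) fixing e. -/
def IsExoCover (e : E) (γ : E → E) : Prop :=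
  A.IsExo γ ∧ γ e = e ∧ ∀ π, A.IsExo π → π e = e → A.exoLe γ π

/-- The restriction of the partial algebra to a subset containing 0 (with the
operation defined whenever it is defined in E and the result lies in the subset). -/
def restrictSet (S : Set E) (h0 : A.zero ∈ S) : PartialAlg S where
  R a b s := A.R a.1 b.1 s.1
  zero := ⟨A.zero, h0⟩

/-- The axioms (PEA1)–(PEA4) of a pseudoeffect algebra with unit `one`
(including single-valuedness of the partial operation). -/
def IsPEA (one : E) : Prop :=
  (∀ a b c d : E, A.R a b c → A.R a b d → c = d) ∧
  -- (PEA1)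
  (∀ a b c ab abc : E, A.R a b ab → A.R ab c abc → ∃ bc, A.R b c bc ∧ A.R a bc abc) ∧
  (∀ a b c bc abc : E, A.R b c bc → A.R a bc abc → ∃ ab, A.R a b ab ∧ A.R ab c abc) ∧
  -- (PEA2)
  (∀ a : E, ∃! d, A.R a d one) ∧
  (∀ a : E, ∃! e, A.R e a one) ∧
  -- (PEA3)
  (∀ a b s : E, A.R a b s → (∃ d, A.R d a s) ∧ (∃ e, A.R b e s)) ∧
  -- (PEA4)
  (∀ a s : E, A.R one a s ∨ A.R a one s → a = A.zero)

end PartialAlg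

end GPEApaper

namespace GPEApaper

namespace PartialAlg

variable {E : Type u} (A : PartialAlg E)

/-- [Q]_γ : the set of all orthosums (suprema) of ΓEX-orthogonal (γ-orthogonal)
families of elements of Q (the empty family contributing 0). -/
def gammaClosure (Q : Set E) : Set E :=
  {s : E | ∃ (ι : Type u) (e : ι → E),
    (∀ i, e i ∈ Q) ∧ A.GEXOrthogonal e ∧ A.IsOrthosum e s}

/-- Q^γ := {γ_e q : e ∈ E, q ∈ Q}, for a cover system γ. -/
def gammaSet (_A : PartialAlg E) (γ : E → E → E) (Q : Set E) : Set E :=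
  {x : E | ∃ a q, q ∈ Q ∧ x = γ a q}

/-- K is type-determining: K = [K]_γ = K^γ. -/
def IsTD (γ : E → E → E) (K : Set E) : Prop :=
  K = A.gammaClosure K ∧ K = A.gammaSet γ K

/-- The conjunction of conditions (i) and (ii) of the fundamental decomposition
theorem for the triple (π₁, π₂, π₃): they are pairwise disjoint elements of
ΓEX(E) with join 1 (so E = π₁(E) ⊕ π₂(E) ⊕ π₃(E)), π₁ is type-K, π₂ is
locally type-K but properly non-K, and π₃ is purely non-K.  Here γ is the
exocentral cover system and gK = γ_K, gKt = γ_K̃ . -/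
def TDDecompProp (γ : E → E → E) (K : Set E) (gK gKt : E → E)
    (π₁ π₂ π₃ : E → E) : Prop :=
  A.IsExo π₁ ∧ A.IsExo π₂ ∧ A.IsExo π₃ ∧
  A.exoDisjoint π₁ π₂ ∧ A.exoDisjoint π₁ π₃ ∧ A.exoDisjoint π₂ π₃ ∧
  -- (i): π₁ ∨ π₂ ∨ π₃ = 1 …
  A.exoSup π₁ (A.exoSup π₂ π₃) = id ∧
  -- … so that E = π₁(E) ⊕ π₂(E) ⊕ π₃(E)
  (∀ a : E, ∃! t : E × E × E, t.1 ∈ Set.range π₁ ∧ t.2.1 ∈ Set.range π₂ ∧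
    t.2.2 ∈ Set.range π₃ ∧ ∃ m : E, A.R t.1 t.2.1 m ∧ A.R m t.2.2 a) ∧
  -- (ii): π₁ is type-K (π₁ = γ_k for some k ∈ K̃ = K ∩ Γ(E))
  (∃ k, (k ∈ K ∧ A.Central k) ∧ π₁ = γ k) ∧
  -- π₂ is locally type-K (π₂ = γ_k for some k ∈ K) but properly non-K
  (∃ k ∈ K, π₂ = γ k) ∧ A.exoDisjoint π₂ gKt ∧
  -- π₃ is purely non-K
  A.exoDisjoint π₃ gK

end PartialAlg

end GPEApaper

namespace GPEAproof
open GPEApaper PartialAlg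
set_option linter.unusedSectionVars false

variable {E : Type u} {A : PartialAlg E}

section Basic
variable (hA : A.IsGPEA)
include hA

lemma fnn {a b c d : E} (h1 : A.R a b c) (h2 : A.R a b d) : c = d := hA.1 _ _ _ _ h1 h2

lemma assoc1 {a b c ab abc : E} (h1 : A.R a b ab) (h2 : A.R ab c abc) :
    ∃ bc, A.R b c bc ∧ A.R a bc abc := hA.2.1 _ _ _ _ _ h1 h2

lemma assoc2 {a b c bc abc : E} (h1 : A.R b c bc) (h2 : A.R a bc abc) :
    ∃ ab, A.R a b ab ∧ A.R ab c abc := hA.2.2.1 _ _ _ _ _ h1 h2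

lemma conjL {a b s : E} (h : A.R a b s) : ∃ d, A.R d a s := (hA.2.2.2.1 _ _ _ h).1
lemma conjR {a b s : E} (h : A.R a b s) : ∃ e, A.R b e s := (hA.2.2.2.1 _ _ _ h).2

lemma lcan {a b c s : E} (h1 : A.R a b s) (h2 : A.R a c s) : b = c :=
  hA.2.2.2.2.1 _ _ _ _ h1 h2

lemma rcan {a b c s : E} (h1 : A.R b a s) (h2 : A.R c a s) : b = c :=
  hA.2.2.2.2.2.1 _ _ _ _ h1 h2

lemma posz {a b : E} (h : A.R a b A.zero) : a = A.zero ∧ b = A.zero :=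
  hA.2.2.2.2.2.2.1 _ _ h

lemma addz (a : E) : A.R a A.zero a := (hA.2.2.2.2.2.2.2 a).1
lemma zadd (a : E) : A.R A.zero a a := (hA.2.2.2.2.2.2.2 a).2

lemma le_refl (a : E) : A.le a a := ⟨A.zero, addz hA a⟩
lemma zero_le (a : E) : A.le A.zero a := ⟨a, zadd hA a⟩

lemma le_zero {a : E} (h : A.le a A.zero) : a = A.zero := by
  obtain ⟨x, hx⟩ := h; exact (posz hA hx).1

lemma le_of_R_left {a b s : E} (h : A.R a b s) : A.le a s := ⟨b, h⟩
lemma le_of_R_right {a b s : E} (h : A.R a b s) : A.le b s := by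
  obtain ⟨e, he⟩ := conjR hA h; exact ⟨e, he⟩

lemma le_trans {a b c : E} (h1 : A.le a b) (h2 : A.le b c) : A.le a c := by
  obtain ⟨x, hx⟩ := h1; obtain ⟨y, hy⟩ := h2
  obtain ⟨xy, _, h⟩ := assoc1 hA hx hy; exact ⟨xy, h⟩

lemma cancel_self_right {a t : E} (h : A.R a t a) : t = A.zero := lcan hA h (addz hA a)
lemma cancel_self_left {a t : E} (h : A.R t a a) : t = A.zero := rcan hA h (zadd hA a)

lemma le_antisymm {a b : E} (h1 : A.le a b) (h2 : A.le b a) : a = b := by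
  obtain ⟨x, hx⟩ := h1; obtain ⟨y, hy⟩ := h2
  obtain ⟨xy, hxy, h⟩ := assoc1 hA hx hy
  have hx0 : x = A.zero := ((posz hA) (by rwa [cancel_self_right hA h] at hxy)).1
  rw [hx0] at hx; exact fnn hA (addz hA a) hx

/-- restrict a sum on the right: if a ⊕ w defined and c ≤ w then a ⊕ c defined. -/
lemma defined_of_le_right {a w c : E} (h : A.Defined a w) (hc : A.le c w) :
    A.Defined a c := by
  obtain ⟨s, hs⟩ := h; obtain ⟨y, hy⟩ := hc
  obtain ⟨ac, hac, _⟩ := assoc2 hA hy hs; exact ⟨ac, hac⟩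

/-- restrict a sum on the left: if w ⊕ b defined and c ≤ w then c ⊕ b defined. -/
lemma defined_of_le_left {w b c : E} (h : A.Defined w b) (hc : A.le c w) :
    A.Defined c b := by
  obtain ⟨s, hs⟩ := h; obtain ⟨y, hy⟩ := hc
  obtain ⟨yb, hyb, hs2⟩ := assoc1 hA hy hs
  have hble : A.le b yb := le_of_R_right hA hyb
  exact defined_of_le_right hA ⟨s, hs2⟩ hble

/-- monotonicity in right argument. -/
lemma add_le_add_right {a b b' s s' : E} (h : A.R a b s) (h' : A.R a b' s')
    (hb : A.le b b') : A.le s s' := by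
  obtain ⟨y, hy⟩ := hb
  obtain ⟨by', hby, hs2⟩ := assoc2 hA hy h'
  have : by' = s := fnn hA hby h
  rw [this] at hs2; exact ⟨y, hs2⟩

/-- monotonicity in left argument. -/
lemma add_le_add_left {a a' b s s' : E} (h : A.R a b s) (h' : A.R a' b s')
    (ha : A.le a a') : A.le s s' := by
  obtain ⟨x, hx⟩ := ha
  obtain ⟨xb, hxb, hs2⟩ := assoc1 hA hx h'
  obtain ⟨x', hx'⟩ := conjR hA hxb
  obtain ⟨sx, hsx, hs3⟩ := assoc2 hA hx' hs2
  have : sx = s := fnn hA hsx h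
  rw [this] at hs3; exact ⟨x', hs3⟩

/-- if a' ⊕ b defined and a ≤ a' then a ⊕ b defined. -/
lemma defined_of_le_left' {a a' b : E} (h : A.Defined a' b) (ha : A.le a a') :
    A.Defined a b := by
  obtain ⟨s, hs⟩ := h; obtain ⟨x, hx⟩ := ha
  obtain ⟨xb, hxb, hs2⟩ := assoc1 hA hx hs
  exact defined_of_le_right hA ⟨s, hs2⟩ (le_of_R_right hA hxb)

lemma add_le_add {a a' b b' s s' : E} (h : A.R a b s) (h' : A.R a' b' s')
    (ha : A.le a a') (hb : A.le b b') : A.le s s' := by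
  have hab' : A.Defined a b' := defined_of_le_left' hA ⟨s', h'⟩ ha
  obtain ⟨t, ht⟩ := hab'
  exact le_trans hA (add_le_add_right hA h ht hb) (add_le_add_left hA ht h' ha)

omit hA in
lemma perp_symm {a b : E} (h : A.perp a b) : A.perp b a := by
  obtain ⟨s, h1, h2⟩ := h; exact ⟨s, h2, h1⟩

lemma perp_zero (a : E) : A.perp a A.zero := ⟨a, addz hA a, zadd hA a⟩

end Basic

section Exo
variable (hA : A.IsGPEA)
include hA

omit hA in
lemma exo1 {π : E → E} (hπ : A.IsExo π) {e f s : E} (h : A.R e f s) :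
    A.R (π e) (π f) (π s) := hπ.1 _ _ _ h
omit hA in
lemma exo2 {π : E → E} (hπ : A.IsExo π) (e : E) : π (π e) = π e := hπ.2.1 e
omit hA in
lemma exo3 {π : E → E} (hπ : A.IsExo π) (e : E) : A.le (π e) e := hπ.2.2.1 e
omit hA in
lemma exo4 {π : E → E} (hπ : A.IsExo π) {e f : E} (he : π e = e) (hf : π f = A.zero) :
    A.perp e f := hπ.2.2.2 e f he hf

lemma exo_zero {π : E → E} (hπ : A.IsExo π) : π A.zero = A.zero :=
  le_zero hA (exo3 hπ A.zero)

lemma exo_mono {π : E → E} (hπ : A.IsExo π) {a b : E} (h : A.le a b) :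
    A.le (π a) (π b) := by obtain ⟨x, hx⟩ := h; exact ⟨π x, exo1 hπ hx⟩

lemma exo_fix_of_le {π : E → E} (hπ : A.IsExo π) {x b : E} (hx : A.le x b)
    (hb : π b = b) : π x = x := by
  obtain ⟨y, hy⟩ := hx
  have hy' : A.R (π x) (π y) b := by have := exo1 hπ hy; rwa [hb] at this
  obtain ⟨s, hs⟩ := exo3 hπ x
  obtain ⟨sy, hsy, hb2⟩ := assoc1 hA hs hy
  have hsy' : sy = π y := lcan hA hb2 hy'
  rw [hsy'] at hsy
  have h1 : A.le y (π y) := le_of_R_right hA hsy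
  have h2 : y = π y := le_antisymm hA h1 (exo3 hπ y)
  rw [← h2] at hsy
  have hs0 : s = A.zero := cancel_self_left hA hsy
  rw [hs0] at hs
  exact fnn hA (addz hA (π x)) hs

lemma rdiv_spec {a b : E} (h : ∃ x, A.R a x b) : A.R a (A.rdiv a b) b := by
  unfold PartialAlg.rdiv
  exact Classical.epsilon_spec h

omit hA in
lemma compl_apply (π : E → E) (e : E) : A.exoCompl π e = A.rdiv (π e) e := rfl

lemma compl_R {π : E → E} (hπ : A.IsExo π) (e : E) :
    A.R (π e) (A.exoCompl π e) e := rdiv_spec hA (exo3 hπ e)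

lemma compl_killed {π : E → E} (hπ : A.IsExo π) (e : E) :
    π (A.exoCompl π e) = A.zero := by
  have h := exo1 hπ (compl_R hA hπ e)
  rw [exo2 hπ e] at h
  exact cancel_self_right hA h

lemma compl_R' {π : E → E} (hπ : A.IsExo π) (e : E) :
    A.R (A.exoCompl π e) (π e) e := by
  obtain ⟨s, h1, h2⟩ := exo4 hπ (exo2 hπ e) (compl_killed hA hπ e)
  have : s = e := fnn hA h1 (compl_R hA hπ e)
  rwa [this] at h2

lemma compl_unique {π : E → E} (hπ : A.IsExo π) {e x : E} (h : A.R (π e) x e) :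
    x = A.exoCompl π e := lcan hA h (compl_R hA hπ e)

lemma compl_of_kill {π : E → E} (hπ : A.IsExo π) {x : E} (h : π x = A.zero) :
    A.exoCompl π x = x := by
  have h1 := compl_R hA hπ x
  rw [h] at h1
  exact lcan hA h1 (zadd hA x)

lemma compl_of_fix {π : E → E} (hπ : A.IsExo π) {x : E} (h : π x = x) :
    A.exoCompl π x = A.zero := by
  have h1 := compl_R hA hπ x
  rw [h] at h1
  exact cancel_self_right hA h1

lemma kill_of_compl_fix {π : E → E} (hπ : A.IsExo π) {x : E}
    (h : A.exoCompl π x = x) : π x = A.zero := by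
  have h1 := compl_R hA hπ x
  rw [h] at h1
  exact cancel_self_left hA h1

lemma fix_of_compl_kill {π : E → E} (hπ : A.IsExo π) {x : E}
    (h : A.exoCompl π x = A.zero) : π x = x := by
  have h1 := compl_R hA hπ x
  rw [h] at h1
  exact fnn hA (addz hA (π x)) h1

lemma compl_exo {π : E → E} (hπ : A.IsExo π) : A.IsExo (A.exoCompl π) := by
  refine ⟨?_, ?_, ?_, ?_⟩
  · intro e f s h
    have h_e := compl_R hA hπ e
    have h_f := compl_R hA hπ f
    have h_s : A.R (π e) (π f) (π s) := exo1 hπ h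
    have h_sd := compl_R hA hπ s
    obtain ⟨t, ht1, ht2⟩ := assoc1 hA h_e h
    obtain ⟨w, hw1, hw2⟩ := assoc2 hA h_f ht1
    obtain ⟨v, hv1, hv2⟩ := exo4 hπ (exo2 hπ f) (compl_killed hA hπ e)
    have hvw : v = w := fnn hA hv2 hw1
    rw [hvw] at hv1
    obtain ⟨z, hz1, hz2⟩ := assoc1 hA hv1 hw2
    obtain ⟨ab, hab1, hab2⟩ := assoc2 hA hz2 ht2
    have : ab = π s := fnn hA hab1 h_s
    rw [this] at hab2
    have : z = A.exoCompl π s := lcan hA hab2 h_sd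
    rwa [this] at hz1
  · intro e; exact compl_of_kill hA hπ (compl_killed hA hπ e)
  · intro e; exact le_of_R_left hA (compl_R' hA hπ e)
  · intro e f he hf
    have hπe : π e = A.zero := kill_of_compl_fix hA hπ he
    have hπf : π f = f := fix_of_compl_kill hA hπ hf
    exact perp_symm (exo4 hπ hπf hπe)

lemma commute {π ξ : E → E} (hπ : A.IsExo π) (hξ : A.IsExo ξ) (e : E) :
    π (ξ e) = ξ (π e) := by
  have h_e := compl_R hA hπ e
  have h1 : A.R (π (ξ (π e))) (π (ξ (A.exoCompl π e))) (π (ξ e)) :=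
    exo1 hπ (exo1 hξ h_e)
  have h2 : π (ξ (A.exoCompl π e)) = A.zero := by
    have hle : A.le (π (ξ (A.exoCompl π e))) (π (A.exoCompl π e)) :=
      exo_mono hA hπ (exo3 hξ _)
    rw [compl_killed hA hπ e] at hle
    exact le_zero hA hle
  have h3 : π (ξ (π e)) = ξ (π e) :=
    exo_fix_of_le hA hπ (exo3 hξ (π e)) (exo2 hπ e)
  rw [h2, h3] at h1
  exact fnn hA h1 (addz hA (ξ (π e)))

lemma perp_map {π : E → E} (hπ : A.IsExo π) {x y : E} (h : A.perp x y) :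
    A.perp (π x) (π y) := by
  obtain ⟨s, h1, h2⟩ := h; exact ⟨π s, exo1 hπ h1, exo1 hπ h2⟩

lemma perp_R_rev {ξ : E → E} (hξ : A.IsExo ξ) {a b f : E} (ha : ξ a = a)
    (hb : ξ b = A.zero) (hf : A.R a b f) : A.R b a f := by
  obtain ⟨f', hf1, hf2⟩ := exo4 hξ ha hb
  have : f' = f := fnn hA hf1 hf
  rwa [this] at hf2

lemma perp_add_of_fix {ξ : E → E} (hξ : A.IsExo ξ) {a b e f : E} (ha : ξ a = a)
    (hb : ξ b = A.zero) (hf : A.R a b f) (he : ξ e = e) (hea : A.perp e a) :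
    A.perp e f := by
  obtain ⟨u, hu1, hu2⟩ := hea
  have hu : ξ u = u := by
    have := exo1 hξ hu1; rw [he, ha] at this; exact fnn hA this hu1
  obtain ⟨w, hw1, hw2⟩ := exo4 hξ hu hb
  refine ⟨w, ?_, ?_⟩
  · obtain ⟨t, ht1, ht2⟩ := assoc1 hA hu1 hw1
    have : t = f := fnn hA ht1 hf
    rwa [this] at ht2
  · obtain ⟨ab, hab1, hab2⟩ := assoc2 hA hu2 hw2
    have : ab = f := fnn hA hab1 (perp_R_rev hA hξ ha hb hf)
    rwa [this] at hab2

lemma perp_add_of_kill {ξ : E → E} (hξ : A.IsExo ξ) {a b e f : E} (ha : ξ a = a)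
    (hb : ξ b = A.zero) (hf : A.R a b f) (he : ξ e = A.zero) (heb : A.perp e b) :
    A.perp e f := by
  obtain ⟨v, hv1, hv2⟩ := heb
  have hv : ξ v = A.zero := by
    have := exo1 hξ hv1; rw [he, hb] at this; exact fnn hA this (zadd hA A.zero)
  obtain ⟨w, hw1, hw2⟩ := exo4 hξ ha hv
  refine ⟨w, ?_, ?_⟩
  · obtain ⟨t, ht1, ht2⟩ := assoc1 hA hv1 hw2
    have : t = f := fnn hA ht1 (perp_R_rev hA hξ ha hb hf)
    rwa [this] at ht2
  · obtain ⟨ab, hab1, hab2⟩ := assoc2 hA hv2 hw1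
    have : ab = f := fnn hA hab1 hf
    rwa [this] at hab2

lemma perp_add {ξ : E → E} (hξ : A.IsExo ξ) {a b f : E} (ha : ξ a = a)
    (hb : ξ b = A.zero) (hf : A.R a b f) {e : E} (hea : A.perp e a)
    (heb : A.perp e b) : A.perp e f := by
  have he12 := compl_R hA hξ e
  have hfix1 : ξ (ξ e) = ξ e := exo2 hξ e
  have hkill2 : ξ (A.exoCompl ξ e) = A.zero := compl_killed hA hξ e
  -- perp e₁ a and perp e₂ b
  have hea1 : A.perp (ξ e) a := by
    have := perp_map hA hξ hea; rwa [ha] at this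
  have heb2 : A.perp (A.exoCompl ξ e) b := by
    have := perp_map hA (compl_exo hA hξ) heb
    rwa [compl_of_kill hA hξ hb] at this
  obtain ⟨p, hp1, hp2⟩ := hea1
  obtain ⟨q, hq1, hq2⟩ := heb2
  have hpfix : ξ p = p := by
    have := exo1 hξ hp1; rw [hfix1, ha] at this; exact fnn hA this hp1
  have hqkill : ξ q = A.zero := by
    have := exo1 hξ hq1; rw [hkill2, hb] at this; exact fnn hA this (zadd hA A.zero)
  obtain ⟨w, hw1, hw2⟩ := exo4 hξ hpfix hqkill
  obtain ⟨r, hr1, hr2⟩ := exo4 hξ ha hkill2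
  refine ⟨w, ?_, ?_⟩
  · -- R e f w
    obtain ⟨aq, haq1, haq2⟩ := assoc1 hA hp1 hw1
    obtain ⟨ab', hab1', hab2'⟩ := assoc2 hA hq1 haq1
    have : ab' = r := fnn hA hab1' hr1
    rw [this] at hab2'
    obtain ⟨ab2, hab21, hab22⟩ := assoc1 hA hr2 hab2'
    have : ab2 = f := fnn hA hab21 hf
    rw [this] at hab22
    obtain ⟨ab3, hab31, hab32⟩ := assoc2 hA hab22 haq2
    have : ab3 = e := fnn hA hab31 he12
    rwa [this] at hab32
  · -- R f e w
    obtain ⟨e2p, he2p1, he2p2⟩ := assoc1 hA hq2 hw2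
    obtain ⟨ab4, hab41, hab42⟩ := assoc2 hA hp2 he2p1
    have : ab4 = r := fnn hA hab41 hr2
    rw [this] at hab42
    obtain ⟨bc5, hbc51, hbc52⟩ := assoc1 hA hr1 hab42
    have : bc5 = e := fnn hA hbc51 (compl_R' hA hξ e)
    rw [this] at hbc52
    obtain ⟨ab6, hab61, hab62⟩ := assoc2 hA hbc52 he2p2
    have : ab6 = f := fnn hA hab61 (perp_R_rev hA hξ ha hb hf)
    rwa [this] at hab62

lemma comp_exo {π ξ : E → E} (hπ : A.IsExo π) (hξ : A.IsExo ξ) :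
    A.IsExo (π ∘ ξ) := by
  refine ⟨?_, ?_, ?_, ?_⟩
  · intro e f s h; exact exo1 hπ (exo1 hξ h)
  · intro e
    show π (ξ (π (ξ e))) = π (ξ e)
    rw [commute hA hξ hπ (ξ e), exo2 hξ e, exo2 hπ (ξ e)]
  · intro e; exact le_trans hA (exo3 hπ (ξ e)) (exo3 hξ e)
  · intro x y hx hy
    have hx1 : ξ x = x := by
      have h1 : A.le x (ξ x) := by
        have := exo3 hπ (ξ x); rwa [show π (ξ x) = x from hx] at this
      exact (le_antisymm hA h1 (exo3 hξ x)).symm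
    have hx2 : π x = x := by
      have hc : ξ (π x) = x := by rw [← commute hA hπ hξ x]; exact hx
      have h1 : A.le x (π x) := by
        have := exo3 hξ (π x); rwa [hc] at this
      exact (le_antisymm hA h1 (exo3 hπ x)).symm
    have hperp1 : A.perp x (ξ y) := exo4 hπ hx2 hy
    have hperp2 : A.perp x (A.exoCompl ξ y) := exo4 hξ hx1 (compl_killed hA hξ y)
    exact perp_add hA hξ (exo2 hξ y) (compl_killed hA hξ y) (compl_R hA hξ y)
      hperp1 hperp2

lemma compl_compl {π : E → E} (hπ : A.IsExo π) :
    A.exoCompl (A.exoCompl π) = π := by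
  funext e
  have h1 := compl_R hA (compl_exo hA hπ) e
  have h2 := compl_R' hA hπ e
  exact lcan hA h1 h2

lemma exoLe_antisymm {π ξ : E → E} (hπ : A.IsExo π) (hξ : A.IsExo ξ)
    (h1 : A.exoLe ξ π) (h2 : A.exoLe π ξ) : ξ = π := by
  funext x
  calc ξ x = ξ (π x) := congrFun h1 x
    _ = π (ξ x) := commute hA hξ hπ x
    _ = π x := (congrFun h2 x).symm

lemma exoLe_fix {ξ σ : E → E} (hσ : A.IsExo σ) (hξ : A.IsExo ξ)
    (hle : A.exoLe ξ σ) {x : E} (hx : ξ x = x) : σ x = x := by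
  have h1 : x = ξ (σ x) := by
    have := congrFun hle x; rwa [hx] at this
  have h3 := exo3 hξ (σ x)
  rw [← h1] at h3
  exact le_antisymm hA (exo3 hσ x) h3

lemma exoLe_of_kill {π ξ : E → E} (hπ : A.IsExo π) (hξ : A.IsExo ξ)
    (h : ∀ x, ξ (A.exoCompl π x) = A.zero) : A.exoLe ξ π := by
  funext x
  have h1 := exo1 hξ (compl_R hA hπ x)
  rw [h x] at h1
  exact fnn hA (addz hA (ξ (π x))) h1 |>.symm

lemma kill_of_exoLe {π ξ : E → E} (hπ : A.IsExo π) (hξ : A.IsExo ξ)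
    (h : A.exoLe ξ π) (x : E) : ξ (A.exoCompl π x) = A.zero := by
  have h0 : ξ (A.exoCompl π x) = ξ (π (A.exoCompl π x)) := congrFun h _
  rw [h0, compl_killed hA hπ x, exo_zero hA hξ]

lemma exoLe_compl_of_disjoint {π ξ : E → E} (hπ : A.IsExo π) (hξ : A.IsExo ξ)
    (h : ∀ e, ξ (π e) = A.zero) : A.exoLe ξ (A.exoCompl π) := by
  apply exoLe_of_kill hA (compl_exo hA hπ) hξ
  intro x
  rw [compl_compl hA hπ]; exact h x

lemma disjoint_of_exoLe_compl {π ξ : E → E} (hπ : A.IsExo π) (hξ : A.IsExo ξ)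
    (h : A.exoLe ξ (A.exoCompl π)) (e : E) : ξ (π e) = A.zero := by
  have := kill_of_exoLe hA (compl_exo hA hπ) hξ h (π e)
  rwa [compl_compl hA hπ, exo2 hπ e] at this

lemma exoLe_trans {π ξ τ : E → E} (h1 : A.exoLe ξ π) (h2 : A.exoLe π τ) :
    A.exoLe ξ τ := by
  funext x
  have e1 : ∀ y, ξ y = ξ (π y) := fun y => congrFun h1 y
  have e2 : ∀ y, π y = π (τ y) := fun y => congrFun h2 y
  show ξ x = ξ (τ x)
  rw [e1 x, e2 x, ← e1 (τ x)]

end Exo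

section Cover
variable (hA : A.IsGPEA) {γ : E → E → E} (hγ : ∀ a : E, A.IsExoCover a (γ a))
include hA hγ

omit hA in
lemma cover_exo (a : E) : A.IsExo (γ a) := (hγ a).1
omit hA in
lemma cover_fix (a : E) : γ a a = a := (hγ a).2.1
omit hA in
lemma cover_min {π : E → E} {a : E} (hπ : A.IsExo π) (h : π a = a) :
    A.exoLe (γ a) π := (hγ a).2.2 π hπ h

lemma exoLe_refl {π : E → E} (hπ : A.IsExo π) : A.exoLe π π := by
  funext x; exact (exo2 hπ x).symm

lemma cover_le_fix {π : E → E} {a : E} (hπ : A.IsExo π)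
    (h : A.exoLe (γ a) π) : π a = a :=
  exoLe_fix hA hπ (cover_exo hγ a) h (cover_fix hγ a)

lemma cover_mono {a b : E} (h : A.le a b) : A.exoLe (γ a) (γ b) :=
  cover_min hγ (cover_exo hγ b)
    (exo_fix_of_le hA (cover_exo hγ b) h (cover_fix hγ b))

lemma exo_apply_eq_cover {π : E → E} (hπ : A.IsExo π) (q : E) :
    π q = γ (π q) q := by
  have h1 : A.exoLe (γ (π q)) π := cover_min hγ hπ (exo2 hπ q)
  have h2 : γ (π q) q = γ (π q) (π q) := congrFun h1 q
  rw [h2, cover_fix hγ (π q)]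

/-- γ(πe) = π ∘ γ e, key lemma for locally type-K part. -/
lemma cover_comp {π : E → E} (hπ : A.IsExo π) (e : E) :
    γ (π e) = π ∘ γ e := by
  have hg : A.IsExo (γ e) := cover_exo hγ e
  have hgp : A.IsExo (γ (π e)) := cover_exo hγ (π e)
  have hcomp : A.IsExo (π ∘ γ e) := comp_exo hA hπ hg
  -- direction 1 : γ(πe) ≤ π ∘ γ e
  have h1 : A.exoLe (γ (π e)) π := cover_min hγ hπ (exo2 hπ e)
  have h2 : A.exoLe (γ (π e)) (γ e) := cover_mono hA hγ (exo3 hπ e)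
  have dir1 : A.exoLe (γ (π e)) (π ∘ γ e) := by
    funext x
    show γ (π e) x = γ (π e) (π (γ e x))
    have c1 : ∀ z, γ (π e) z = γ (π e) (π z) := fun z => congrFun h1 z
    have c2 : ∀ z, γ (π e) z = γ (π e) (γ e z) := fun z => congrFun h2 z
    rw [← c1 (γ e x), ← c2 x]
  -- direction 2 : π ∘ γ e ≤ γ(πe)
  set gp := γ (π e) with hgpdef
  have hgp' : A.IsExo (A.exoCompl gp) := compl_exo hA hgp
  have hτ : A.IsExo (A.exoCompl gp ∘ π) := comp_exo hA hgp' hπ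
  have hσ : A.IsExo (A.exoCompl (A.exoCompl gp ∘ π)) := compl_exo hA hτ
  set σ := A.exoCompl (A.exoCompl gp ∘ π) with hσdef
  have hσπe : σ (π e) = π e := by
    apply compl_of_kill hA hτ
    show A.exoCompl gp (π (π e)) = A.zero
    rw [exo2 hπ e]
    exact compl_of_fix hA hgp (cover_fix hγ (π e))
  have hσπ'e : σ (A.exoCompl π e) = A.exoCompl π e := by
    apply compl_of_kill hA hτ
    show A.exoCompl gp (π (A.exoCompl π e)) = A.zero
    rw [compl_killed hA hπ e]
    exact exo_zero hA hgp'
  have hσe : σ e = e := by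
    have h := exo1 hσ (compl_R hA hπ e)
    rw [hσπe, hσπ'e] at h
    exact fnn hA h (compl_R hA hπ e)
  have h3 : A.exoLe (γ e) σ := cover_min hγ hσ hσe
  have dir2 : A.exoLe (π ∘ γ e) gp := by
    apply exoLe_of_kill hA hgp hcomp
    intro x
    show π (γ e (A.exoCompl gp x)) = A.zero
    set y := A.exoCompl gp x with hydef
    have hyy : A.exoCompl gp y = y :=
      compl_of_kill hA hgp (compl_killed hA hgp x)
    have hτy : A.exoCompl gp (π y) = π y := by
      have hc : π y = A.exoCompl gp (π x) := by
        rw [hydef]; exact commute hA hπ hgp' x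
      rw [hc, exo2 hgp' (π x)]
    have hσy : σ y = A.exoCompl π y := by
      show A.rdiv ((A.exoCompl gp ∘ π) y) y = A.rdiv (π y) y
      rw [Function.comp_apply, hτy]
    have hgy : γ e y = γ e (A.exoCompl π y) := by
      rw [← hσy]; exact congrFun h3 y
    rw [hgy, commute hA hπ hg (A.exoCompl π y), compl_killed hA hπ y,
      exo_zero hA hg]
  exact exoLe_antisymm hA hcomp hgp dir1 dir2

end Cover

section Sums
variable (hA : A.IsGPEA)
include hA

lemma lst_fn {l : List E} : ∀ {s t : E}, A.ListSumsTo l s → A.ListSumsTo l t → s = t := by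
  induction l with
  | nil =>
    intro s t hs ht
    simp only [PartialAlg.ListSumsTo] at hs ht
    rw [hs, ht]
  | cons a l ih =>
    intro s t hs ht
    simp only [PartialAlg.ListSumsTo] at hs ht
    obtain ⟨u, hu, hus⟩ := hs
    obtain ⟨v, hv, hvt⟩ := ht
    rw [ih hu hv] at hus
    exact fnn hA hus hvt

lemma lst_map {π : E → E} (hπ : A.IsExo π) {l : List E} :
    ∀ {s : E}, A.ListSumsTo l s → A.ListSumsTo (l.map π) (π s) := by
  induction l with
  | nil =>
    intro s hs
    simp only [PartialAlg.ListSumsTo] at hs ⊢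
    rw [hs]; exact exo_zero hA hπ
  | cons a l ih =>
    intro s hs
    simp only [PartialAlg.ListSumsTo, List.map_cons] at hs ⊢
    obtain ⟨u, hu, hus⟩ := hs
    exact ⟨π u, ih hu, exo1 hπ hus⟩

lemma lst_zero {l : List E} : ∀ {s : E}, A.ListSumsTo l s →
    (∀ x ∈ l, x = A.zero) → s = A.zero := by
  induction l with
  | nil => intro s hs _; exact hs
  | cons a l ih =>
    intro s hs hz
    simp only [PartialAlg.ListSumsTo] at hs
    obtain ⟨u, hu, hus⟩ := hs
    have ha : a = A.zero := hz a List.mem_cons_self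
    have hu0 : u = A.zero := ih hu fun x hx => hz x (List.mem_cons_of_mem a hx)
    rw [ha, hu0] at hus
    exact fnn hA hus (addz hA A.zero)

omit hA in
lemma enum_spec {ι : Type u} {e : ι → E} {F : Finset ι} {s : E}
    (h : A.FinsetSumsTo e F s) : A.ListSumsTo (F.toList.map e) s := by
  letI := Classical.decEq ι
  apply h
  · exact F.nodup_toList
  · exact Finset.toList_toFinset F

lemma fs_fn {ι : Type u} {e : ι → E} {F : Finset ι} {s t : E}
    (hs : A.FinsetSumsTo e F s) (ht : A.FinsetSumsTo e F t) : s = t :=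
  lst_fn hA (enum_spec hs) (enum_spec ht)

omit hA in
lemma fs_empty {ι : Type u} (e : ι → E) : A.FinsetSumsTo e ∅ A.zero := by
  letI := Classical.decEq ι
  intro l hnd hfs
  cases l with
  | nil => exact rfl
  | cons a l =>
    exfalso
    have : a ∈ (a :: l).toFinset := by
      simp
    rw [hfs] at this
    exact absurd this (Finset.notMem_empty a)

omit hA in
lemma fs_empty_val {ι : Type u} {e : ι → E} {s : E}
    (h : A.FinsetSumsTo e ∅ s) : s = A.zero := by
  letI := Classical.decEq ι
  have := h [] List.nodup_nil (by simp)
  exact this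

lemma fs_insert {ι : Type u} {e : ι → E} {F : Finset ι} {j : ι} {t s : E}
    (hj : (letI := Classical.decEq ι; j ∉ F))
    (ht : A.FinsetSumsTo e F t)
    (hs : A.FinsetSumsTo e (letI := Classical.decEq ι; insert j F) s) :
    A.R (e j) t s := by
  letI := Classical.decEq ι
  have hnd : (j :: F.toList).Nodup := by
    rw [List.nodup_cons]
    exact ⟨fun hmem => hj (Finset.mem_toList.mp hmem), F.nodup_toList⟩
  have hfs : (j :: F.toList).toFinset = insert j F := by
    rw [List.toFinset_cons, Finset.toList_toFinset]
  have h2 := hs (j :: F.toList) hnd hfs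
  simp only [List.map_cons, PartialAlg.ListSumsTo] at h2
  obtain ⟨u, hu, hus⟩ := h2
  rw [lst_fn hA hu (enum_spec ht)] at hus
  exact hus

omit hA in
lemma partial_le_sum {ι : Type u} {e : ι → E} {s : E} (hos : A.IsOrthosum e s)
    {F : Finset ι} {t : E} (ht : A.FinsetSumsTo e F t) : A.le t s :=
  hos.2.1 t ⟨F, ht⟩

lemma fs_singleton {ι : Type u} {e : ι → E} {i : ι} {t : E}
    (h : A.FinsetSumsTo e {i} t) : t = e i := by
  have h2 := h [i] (List.nodup_singleton i) (by simp)
  simp only [List.map_cons, List.map_nil, PartialAlg.ListSumsTo] at h2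
  obtain ⟨u, hu, hut⟩ := h2
  rw [hu] at hut
  exact (fnn hA (addz hA (e i)) hut).symm

lemma fs_zero_comp {ι : Type u} {e : ι → E} {π : E → E} (hπ : A.IsExo π)
    {F : Finset ι} {t : E} (h : ∀ i ∈ F, π (e i) = A.zero)
    (ht : A.FinsetSumsTo e F t) : π t = A.zero := by
  have h1 := lst_map hA hπ (enum_spec ht)
  apply lst_zero hA h1
  intro x hx
  rw [List.mem_map] at hx
  obtain ⟨y, hy, hxy⟩ := hx
  rw [List.mem_map] at hy
  obtain ⟨i, hi, hyi⟩ := hy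
  rw [← hxy, ← hyi]
  exact h i (Finset.mem_toList.mp hi)

lemma lst_mono {ι : Type u} {u v : ι → E} {l : List ι} :
    ∀ {t t' : E}, A.ListSumsTo (l.map u) t → A.ListSumsTo (l.map v) t' →
    (∀ i ∈ l, A.le (u i) (v i)) → A.le t t' := by
  induction l with
  | nil =>
    intro t t' ht ht' _
    simp only [List.map_nil, PartialAlg.ListSumsTo] at ht ht'
    rw [ht, ht']; exact le_refl hA A.zero
  | cons i l ih =>
    intro t t' ht ht' hle
    simp only [List.map_cons, PartialAlg.ListSumsTo] at ht ht'
    obtain ⟨t0, ht0, hR⟩ := ht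
    obtain ⟨t0', ht0', hR'⟩ := ht'
    have h1 : A.le t0 t0' := ih ht0 ht0' fun i hi => hle i (List.mem_cons_of_mem _ hi)
    exact add_le_add hA hR hR' (hle i List.mem_cons_self) h1

lemma fs_mono {ι : Type u} {u v : ι → E} {F : Finset ι} {t t' : E}
    (ht : A.FinsetSumsTo u F t) (ht' : A.FinsetSumsTo v F t')
    (hle : ∀ i ∈ F, A.le (u i) (v i)) : A.le t t' :=
  lst_mono hA (enum_spec ht) (enum_spec ht')
    fun i hi => hle i (Finset.mem_toList.mp hi)

end Sums

section Family
variable (hA : A.IsGPEA) {ι : Type u} {e : ι → E} {π : ι → E → E}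
  (hexo : ∀ i, A.IsExo (π i))
  (hdis : ∀ i j, i ≠ j → A.exoDisjoint (π i) (π j))
  (hfix : ∀ i, π i (e i) = e i)
include hA hexo hdis hfix

lemma fam_kill {i j : ι} (h : i ≠ j) : π i (e j) = A.zero := by
  rw [← hfix j]; exact hdis i j h (e j)

lemma partial_kill {j : ι} {F : Finset ι} {t : E}
    (hj : (letI := Classical.decEq ι; j ∉ F)) (ht : A.FinsetSumsTo e F t) :
    π j t = A.zero := by
  letI := Classical.decEq ι
  exact fs_zero_comp hA (hexo j)
    (fun i hi => fam_kill hA hexo hdis hfix (fun hji => hj (hji ▸ hi))) ht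

lemma partial_apply (horth : A.IsOrthogonal e) {j : ι} {F : Finset ι} {t : E}
    (hj : (letI := Classical.decEq ι; j ∈ F)) (ht : A.FinsetSumsTo e F t) :
    π j t = e j := by
  letI := Classical.decEq ι
  obtain ⟨t', ht'⟩ := horth (F.erase j)
  have hins : insert j (F.erase j) = F := Finset.insert_erase hj
  have hR : A.R (e j) t' t := by
    apply fs_insert hA (Finset.notMem_erase j F) ht'
    rwa [show (letI := Classical.decEq ι; insert j (F.erase j)) = F from hins]
  have h1 := exo1 (hexo j) hR
  rw [hfix j, partial_kill hA hexo hdis hfix (Finset.notMem_erase j F) ht'] at h1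
  exact (fnn hA (addz hA (e j)) h1).symm

lemma partial_le_of_comp (horth : A.IsOrthogonal e) {b : E}
    (hcomp : ∀ j, A.le (e j) (π j b)) {F : Finset ι} {t : E}
    (ht : A.FinsetSumsTo e F t) : A.le t b := by
  letI := Classical.decEq ι
  induction F using Finset.induction_on generalizing t with
  | empty => rw [fs_empty_val ht]; exact zero_le hA b
  | @insert j F hj ih =>
    obtain ⟨tF, htF⟩ := horth F
    have hR : A.R (e j) tF t := fs_insert hA hj htF ht
    obtain ⟨w, hw⟩ := ih htF
    have hkF : π j tF = A.zero := partial_kill hA hexo hdis hfix hj htF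
    have h2 := exo1 (hexo j) hw
    rw [hkF] at h2
    have h3 : π j b = π j w := fnn hA h2 (zadd hA (π j w))
    have h4 : A.le (e j) w :=
      le_trans hA (by rw [← h3]; exact hcomp j) (exo3 (hexo j) w)
    obtain ⟨v, hv⟩ := h4
    obtain ⟨ab, hab1, hab2⟩ := assoc2 hA hv hw
    obtain ⟨m, hm1, hm2⟩ := exo4 (hexo j) (hfix j) hkF
    have : ab = m := fnn hA hab1 hm2
    rw [this] at hab2
    have hmt : m = t := fnn hA hm1 hR
    rw [hmt] at hab2
    exact ⟨v, hab2⟩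

lemma orthpart {s : E} (hos : A.IsOrthosum e s) (i : ι) :
    π i s = e i ∧ A.R (e i) (A.exoCompl (π i) s) s := by
  have horth := hos.1
  obtain ⟨m, hm1, hm2⟩ := exo4 (hexo i) (hfix i) (compl_killed hA (hexo i) s)
  have hub : A.IsUB {t | ∃ F, A.FinsetSumsTo e F t} m := by
    intro t htmem
    obtain ⟨F, hF⟩ := htmem
    have hdec := compl_R hA (hexo i) t
    have h1 : A.le (π i t) (e i) := by
      by_cases hi : (letI := Classical.decEq ι; i ∈ F)
      · rw [partial_apply hA hexo hdis hfix horth hi hF]; exact le_refl hA _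
      · rw [partial_kill hA hexo hdis hfix hi hF]; exact zero_le hA _
    have h2 : A.le (A.exoCompl (π i) t) (A.exoCompl (π i) s) :=
      exo_mono hA (compl_exo hA (hexo i)) (partial_le_sum hos hF)
    exact add_le_add hA hdec hm1 h1 h2
  have hsm : A.le s m := hos.2.2 m hub
  have hci : A.le (e i) (π i s) := by
    obtain ⟨t1, ht1⟩ := horth {i}
    have h5 : π i t1 = e i :=
      partial_apply hA hexo hdis hfix horth (Finset.mem_singleton_self i) ht1
    rw [← h5]
    exact exo_mono hA (hexo i) (partial_le_sum hos ht1)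
  have hms : A.le m s :=
    add_le_add hA hm1 (compl_R hA (hexo i) s) hci (le_refl hA _)
  have heq : s = m := le_antisymm hA hsm hms
  have hm1' : A.R (e i) (A.exoCompl (π i) s) s := heq ▸ hm1
  exact ⟨rcan hA (compl_R hA (hexo i) s) hm1', hm1'⟩

lemma zero_lemma {s : E} (hos : A.IsOrthosum e s) {d : E} (hd : A.le d s)
    (hk : ∀ i, π i d = A.zero) : d = A.zero := by
  obtain ⟨w, hw⟩ := hd
  have hiw : ∀ i, π i w = e i := by
    intro i
    have h1 := exo1 (hexo i) hw
    rw [hk i, (orthpart hA hexo hdis hfix hos i).1] at h1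
    exact lcan hA h1 (zadd hA (e i))
  have hsw : A.le s w := by
    apply hos.2.2 w
    intro t htmem
    obtain ⟨F, hF⟩ := htmem
    exact partial_le_of_comp hA hexo hdis hfix hos.1
      (fun j => by rw [hiw j]; exact le_refl hA _) hF
  have hws : A.le w s := le_of_R_right hA hw
  have : w = s := (le_antisymm hA hsw hws).symm
  rw [this] at hw
  exact cancel_self_left hA hw

lemma ws_lemma
    (hCO1 : ∀ {κ : Type u} (f : κ → E), A.GEXOrthogonal f → ∃ z, A.IsOrthosum f z)
    {s : E} (hos : A.IsOrthosum e s) {x : E} (hx : A.le x s) :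
    A.IsOrthosum (fun i => π i x) x := by
  have hfix' : ∀ i, π i ((fun i => π i x) i) = (fun i => π i x) i :=
    fun i => exo2 (hexo i) x
  have hgex : A.GEXOrthogonal (fun i => π i x) := ⟨π, hexo, hdis, hfix'⟩
  obtain ⟨X, hX⟩ := hCO1 _ hgex
  have hXx : A.le X x := by
    apply hX.2.2 x
    intro t htmem
    obtain ⟨F, hF⟩ := htmem
    exact partial_le_of_comp hA hexo hdis hfix' hX.1
      (fun j => le_refl hA _) hF
  obtain ⟨d, hd⟩ := hXx
  have hkd : ∀ i, π i d = A.zero := by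
    intro i
    have h1 := exo1 (hexo i) hd
    rw [(orthpart hA hexo hdis hfix' hX i).1] at h1
    exact cancel_self_right hA h1
  have hd0 : d = A.zero :=
    zero_lemma hA hexo hdis hfix hos
      (le_trans hA (le_of_R_right hA hd) hx) hkd
  rw [hd0] at hd
  have hXeq : X = x := (fnn hA hd (addz hA X)).symm
  rwa [hXeq] at hX

end Family

section Central
variable (hA : A.IsGPEA)
include hA

lemma central_zero : A.Central A.zero := by
  refine ⟨?_, ?_, ?_, ?_⟩
  · intro a
    exact ⟨A.zero, a, le_refl hA A.zero, ⟨a, addz hA a⟩, zadd hA a⟩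
  · intro a b ha _
    rw [le_zero hA ha]
    exact ⟨b, zadd hA b, addz hA b⟩
  · intro a b s ha hb hs
    rw [le_zero hA ha, le_zero hA hb] at hs
    rw [fnn hA hs (addz hA A.zero)]
    exact le_refl hA A.zero
  · intro a b ab _ _ _
    exact ⟨ab, addz hA ab⟩

/-- If v is π-fixed and v ⊕ πc is defined, then v ⊕ c is defined. -/
lemma defined_whole_of_part {π : E → E} (hπ : A.IsExo π) {v c : E}
    (hv : π v = v) (hd : A.Defined v (π c)) : A.Defined v c := by
  obtain ⟨y, hy⟩ := hd
  have hyfix : π y = y := by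
    have := exo1 hπ hy; rw [hv, exo2 hπ c] at this; exact fnn hA this hy
  obtain ⟨w, hw1, _⟩ := exo4 hπ hyfix (compl_killed hA hπ c)
  obtain ⟨bc, hbc1, hbc2⟩ := assoc1 hA hy hw1
  have : bc = c := fnn hA hbc1 (compl_R hA hπ c)
  rw [this] at hbc2
  exact ⟨w, hbc2⟩

lemma central_exo {c : E} (hc : A.Central c) {π : E → E} (hπ : A.IsExo π) :
    A.Central (π c) := by
  refine ⟨?_, ?_, ?_, ?_⟩
  · -- C1
    intro a
    obtain ⟨x₁, x₂, hx1, hx2, hxa⟩ := hc.1 (π a)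
    have hfix1 : π x₁ = x₁ :=
      exo_fix_of_le hA hπ (le_of_R_left hA hxa) (exo2 hπ a)
    have hfix2 : π x₂ = x₂ :=
      exo_fix_of_le hA hπ (le_of_R_right hA hxa) (exo2 hπ a)
    have hdec := compl_R hA hπ a
    obtain ⟨a₂, ha21, ha22⟩ := assoc1 hA hxa hdec
    refine ⟨x₁, a₂, ?_, ?_, ha22⟩
    · rw [← hfix1]; exact exo_mono hA hπ hx1
    · -- Defined a₂ (π c) with a₂ = x₂ ⊕ π'a
      obtain ⟨pe, hpe1, hpe2⟩ := exo4 hπ (exo2 hπ c) (compl_killed hA hπ a)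
      obtain ⟨y, hy⟩ := defined_of_le_right hA hx2 (exo3 hπ c)
      have hyfix : π y = y := by
        have := exo1 hπ hy; rw [hfix2, exo2 hπ c] at this; exact fnn hA this hy
      obtain ⟨w, hw1, _⟩ := exo4 hπ hyfix (compl_killed hA hπ a)
      obtain ⟨bc, hbc1, hbc2⟩ := assoc1 hA hy hw1
      have : bc = pe := fnn hA hbc1 hpe1
      rw [this] at hbc2
      obtain ⟨ab, hab1, hab2⟩ := assoc2 hA hpe2 hbc2
      have : ab = a₂ := fnn hA hab1 ha21
      rw [this] at hab2
      exact ⟨w, hab2⟩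
  · -- C2
    intro a b ha hb
    have haC : A.le a c := le_trans hA ha (exo3 hπ c)
    have hafix : π a = a := exo_fix_of_le hA hπ ha (exo2 hπ c)
    have hperp2 : A.perp a (A.exoCompl π b) :=
      exo4 hπ hafix (compl_killed hA hπ b)
    have hπbc : A.Defined (π b) c := by
      apply defined_whole_of_part hA hπ (exo2 hπ b)
      obtain ⟨s, hs⟩ := hb
      have := exo1 hπ hs; rw [exo2 hπ c] at this
      exact ⟨π s, this⟩
    have hperp1 : A.perp a (π b) := hc.2.1 a (π b) haC hπbc
    exact perp_add hA hπ (exo2 hπ b) (compl_killed hA hπ b) (compl_R hA hπ b)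
      hperp1 hperp2
  · -- C3
    intro a b s ha hb hs
    have hafix : π a = a := exo_fix_of_le hA hπ ha (exo2 hπ c)
    have hbfix : π b = b := exo_fix_of_le hA hπ hb (exo2 hπ c)
    have hsfix : π s = s := by
      have := exo1 hπ hs; rw [hafix, hbfix] at this; exact fnn hA this hs
    have hsc : A.le s c := hc.2.2.1 a b s (le_trans hA ha (exo3 hπ c))
      (le_trans hA hb (exo3 hπ c)) hs
    rw [← hsfix]
    exact exo_mono hA hπ hsc
  · -- C4
    intro a b ab hac hbc hab
    have hπac : A.Defined (π a) c := by
      apply defined_whole_of_part hA hπ (exo2 hπ a)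
      obtain ⟨s, hs⟩ := hac
      have := exo1 hπ hs; rw [exo2 hπ c] at this
      exact ⟨π s, this⟩
    have hπbc : A.Defined (π b) c := by
      apply defined_whole_of_part hA hπ (exo2 hπ b)
      obtain ⟨s, hs⟩ := hbc
      have := exo1 hπ hs; rw [exo2 hπ c] at this
      exact ⟨π s, this⟩
    have hπab := exo1 hπ hab
    have habC : A.Defined (π ab) c := hc.2.2.2 (π a) (π b) (π ab) hπac hπbc hπab
    -- assemble Defined ab (π c)
    have hdec := compl_R hA hπ ab
    obtain ⟨pe, hpe1, hpe2⟩ := exo4 hπ (exo2 hπ c) (compl_killed hA hπ ab)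
    obtain ⟨v, hv⟩ := defined_of_le_right hA habC (exo3 hπ c)
    have hvfix : π v = v := by
      have := exo1 hπ hv; rw [exo2 hπ ab, exo2 hπ c] at this
      exact fnn hA this hv
    obtain ⟨z, hz1, _⟩ := exo4 hπ hvfix (compl_killed hA hπ ab)
    obtain ⟨bc, hbc1, hbc2⟩ := assoc1 hA hv hz1
    have : bc = pe := fnn hA hbc1 hpe1
    rw [this] at hbc2
    obtain ⟨ab2, hab21, hab22⟩ := assoc2 hA hpe2 hbc2
    have : ab2 = ab := fnn hA hab21 hdec
    rw [this] at hab22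
    exact ⟨z, hab22⟩

end Central

section CentralSum
variable (hA : A.IsGPEA) {ι : Type u} {e : ι → E} {π : ι → E → E}
  (hexo : ∀ i, A.IsExo (π i))
  (hdis : ∀ i j, i ≠ j → A.exoDisjoint (π i) (π j))
  (hfix : ∀ i, π i (e i) = e i)
include hA hexo hdis hfix

lemma central_orthosum (hCO : A.IsCOGPEA)
    (hc : ∀ i, A.Central (e i)) {s : E} (hos : A.IsOrthosum e s) :
    A.Central s := by
  have hCO1 : ∀ {κ : Type u} (f : κ → E), A.GEXOrthogonal f → ∃ z, A.IsOrthosum f z :=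
    fun f h => hCO.1 f h
  have hgexE : A.GEXOrthogonal e := ⟨π, hexo, hdis, hfix⟩
  have heis : ∀ i, A.le (e i) s := fun i =>
    le_of_R_left hA (orthpart hA hexo hdis hfix hos i).2
  refine ⟨?_, ?_, ?_, ?_⟩
  · -- (C1)
    intro a
    choose x y hxc hyc hxy using fun i => (hc i).1 a
    have hxfix : ∀ i, π i (x i) = x i := fun i =>
      exo_fix_of_le hA (hexo i) (hxc i) (hfix i)
    have hgex : A.GEXOrthogonal x := ⟨π, hexo, hdis, hxfix⟩
    obtain ⟨a₁, ha1⟩ := hCO1 x hgex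
    have ha1a : A.le a₁ a := by
      apply ha1.2.2 a
      rintro t ⟨F, hF⟩
      exact partial_le_of_comp hA hexo hdis hxfix ha1.1
        (fun j => by
          rw [← hxfix j]
          exact exo_mono hA (hexo j) (le_of_R_left hA (hxy j))) hF
    have ha1s : A.le a₁ s := by
      apply ha1.2.2 s
      rintro t ⟨F, hF⟩
      exact partial_le_of_comp hA hexo hdis hxfix ha1.1
        (fun j => by
          rw [(orthpart hA hexo hdis hfix hos j).1]; exact hxc j) hF
    obtain ⟨a₂, ha2⟩ := ha1a
    refine ⟨a₁, a₂, ha1s, ?_, ha2⟩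
    apply (hCO.2 e s hgexE hos a₂).1
    intro i
    have hxle : A.le (x i) a₁ := by
      obtain ⟨t1, ht1⟩ := ha1.1 {i}
      have h0 := fs_singleton hA ht1
      rw [← h0]
      exact partial_le_sum ha1 ht1
    obtain ⟨r, hr⟩ := hxle
    obtain ⟨bc, hbc1, hbc2⟩ := assoc1 hA hr ha2
    have : bc = y i := lcan hA hbc2 (hxy i)
    rw [this] at hbc1
    obtain ⟨si, hsi⟩ := hyc i
    obtain ⟨bc2, hbc21, _⟩ := assoc1 hA hbc1 hsi
    exact ⟨bc2, hbc21⟩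
  · -- (C2)
    intro a b ha hb
    have hws := ws_lemma hA hexo hdis hfix hCO1 hos ha
    have hfix' : ∀ i, π i (π i a) = π i a := fun i => exo2 (hexo i) a
    have hgex' : A.GEXOrthogonal (fun i => π i a) := ⟨π, hexo, hdis, hfix'⟩
    have haie : ∀ i, A.le (π i a) (e i) := fun i => by
      rw [← (orthpart hA hexo hdis hfix hos i).1]
      exact exo_mono hA (hexo i) ha
    have hbei : ∀ i, A.Defined b (e i) := fun i =>
      defined_of_le_right hA hb (heis i)
    have hperpi : ∀ i, A.perp (π i a) b := fun i =>
      (hc i).2.1 (π i a) b (haie i) (hbei i)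
    have hpartano : ∀ (F : Finset ι) (t : E),
        A.FinsetSumsTo (fun i => π i a) F t → A.perp b t := by
      letI := Classical.decEq ι
      intro F
      induction F using Finset.induction_on with
      | empty => intro t ht; rw [fs_empty_val ht]; exact perp_zero hA b
      | @insert j F hj ih =>
        intro t ht
        obtain ⟨tF, htF⟩ := hws.1 F
        have hR : A.R ((fun i => π i a) j) tF t := fs_insert hA (e := fun i => π i a) hj htF ht
        exact perp_add hA (hexo j) (hfix' j)
          (partial_kill hA hexo hdis hfix' hj htF) hR
          (perp_symm (hperpi j)) (ih tF htF)
    obtain ⟨V₁, hV₁⟩ : A.Defined a b := by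
      apply (hCO.2 (fun i => π i a) a hgex' hws b).2
      intro i; obtain ⟨sv, h1, _⟩ := hperpi i; exact ⟨sv, h1⟩
    obtain ⟨V₂, hV₂⟩ : A.Defined b a := by
      apply (hCO.2 (fun i => π i a) a hgex' hws b).1
      intro i; obtain ⟨sv, _, h2⟩ := hperpi i; exact ⟨sv, h2⟩
    obtain ⟨e₀, he₀⟩ := conjR hA hV₁
    have hae₀ : A.le a e₀ := by
      apply hws.2.2 e₀
      rintro t ⟨F, hF⟩
      obtain ⟨u_t, hbt1, hbt2⟩ := hpartano F t hF
      have hta : A.le t a := partial_le_sum hws hF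
      have hutV : A.le u_t V₁ := add_le_add hA hbt2 hV₁ hta (le_refl hA b)
      obtain ⟨z, hz⟩ := hutV
      obtain ⟨bc, hbc1, hbc2⟩ := assoc1 hA hbt1 hz
      have : bc = e₀ := lcan hA hbc2 he₀
      rw [this] at hbc1
      exact ⟨z, hbc1⟩
    obtain ⟨d, hd⟩ := hae₀
    have hV₂V₁ : A.le V₂ V₁ := by
      obtain ⟨ab, hab1, hab2⟩ := assoc2 hA hd he₀
      have : ab = V₂ := fnn hA hab1 hV₂
      rw [this] at hab2
      exact ⟨d, hab2⟩
    obtain ⟨d₁, hd₁⟩ := conjL hA hV₂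
    have had₁ : A.le a d₁ := by
      apply hws.2.2 d₁
      rintro t ⟨F, hF⟩
      obtain ⟨u_t, hbt1, hbt2⟩ := hpartano F t hF
      have hta : A.le t a := partial_le_sum hws hF
      have hutV : A.le u_t V₂ := add_le_add hA hbt1 hV₂ (le_refl hA b) hta
      obtain ⟨z, hz⟩ := hutV
      obtain ⟨bz, hbz, htbz⟩ := assoc1 hA hbt2 hz
      obtain ⟨z2, hz2⟩ := conjL hA hbz
      obtain ⟨ab, hab1, hab2⟩ := assoc2 hA hz2 htbz
      have : ab = d₁ := rcan hA hab2 hd₁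
      rw [this] at hab1
      exact ⟨z2, hab1⟩
    obtain ⟨w, hw⟩ := had₁
    have hV₁V₂ : A.le V₁ V₂ := by
      obtain ⟨wb, hwb, hawb⟩ := assoc1 hA hw hd₁
      obtain ⟨e', he'⟩ := conjR hA hwb
      exact add_le_add_right hA hV₁ hawb ⟨e', he'⟩
    have hVeq : V₁ = V₂ := le_antisymm hA hV₁V₂ hV₂V₁
    exact ⟨V₁, hV₁, by rw [hVeq]; exact hV₂⟩
  · -- (C3)
    intro a b s' ha hb hab
    have hwsa := ws_lemma hA hexo hdis hfix hCO1 hos ha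
    have hwsb := ws_lemma hA hexo hdis hfix hCO1 hos hb
    have hfixs' : ∀ i, π i (π i s') = π i s' := fun i => exo2 (hexo i) s'
    have hgexs' : A.GEXOrthogonal (fun i => π i s') := ⟨π, hexo, hdis, hfixs'⟩
    obtain ⟨X, hX⟩ := hCO1 _ hgexs'
    have has' : A.le a s' := le_of_R_left hA hab
    have haX : A.le a X := by
      apply hwsa.2.2 X
      rintro t ⟨F, hF⟩
      obtain ⟨XF, hXF⟩ := hX.1 F
      have h1 : A.le t XF := fs_mono hA hF hXF fun i _ =>
        exo_mono hA (hexo i) has'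
      exact le_trans hA h1 (partial_le_sum hX hXF)
    have hXs' : A.le X s' := by
      apply hX.2.2 s'
      rintro t ⟨F, hF⟩
      exact partial_le_of_comp hA hexo hdis hfixs' hX.1
        (fun j => le_refl hA _) hF
    obtain ⟨d, hd⟩ := hXs'
    obtain ⟨bt, hbt⟩ := haX
    obtain ⟨btd, h1, h2⟩ := assoc1 hA hbt hd
    have hbtd : btd = b := lcan hA h2 hab
    rw [hbtd] at h1
    have hdb : A.le d b := le_of_R_right hA h1
    have hkd : ∀ i, π i d = A.zero := by
      intro i
      have hXi : π i X = π i s' := by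
        have hle1 : A.le (π i s') X := by
          obtain ⟨t1, ht1⟩ := hX.1 {i}
          rw [← fs_singleton hA ht1]
          exact partial_le_sum hX ht1
        have h3 : A.le (π i s') (π i X) := by
          have h4 := exo_mono hA (hexo i) hle1
          rwa [exo2 (hexo i) s'] at h4
        have h5 : A.le (π i X) (π i s') := by
          have h6 := exo_mono hA (hexo i) (⟨d, hd⟩ : A.le X s')
          exact h6
        exact le_antisymm hA h5 h3
      have h4 := exo1 (hexo i) hd
      rw [hXi] at h4
      exact cancel_self_right hA h4
    have hd0 : d = A.zero :=
      zero_lemma hA hexo hdis (fun i => exo2 (hexo i) b) hwsb hdb hkd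
    rw [hd0] at hd
    have hXeq : X = s' := fnn hA (addz hA X) hd
    rw [hXeq] at hX
    have hcomp : ∀ i, A.le (π i s') (e i) := fun i => by
      have h5 : A.le (π i a) (e i) := by
        rw [← (orthpart hA hexo hdis hfix hos i).1]
        exact exo_mono hA (hexo i) ha
      have h6 : A.le (π i b) (e i) := by
        rw [← (orthpart hA hexo hdis hfix hos i).1]
        exact exo_mono hA (hexo i) hb
      exact (hc i).2.2.1 _ _ _ h5 h6 (exo1 (hexo i) hab)
    apply hX.2.2 s
    rintro t ⟨F, hF⟩
    obtain ⟨sF, hsF⟩ := hos.1 F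
    exact le_trans hA (fs_mono hA hF hsF fun i _ => hcomp i)
      (partial_le_sum hos hsF)
  · -- (C4)
    intro a b ab hac hbc hab
    apply (hCO.2 e s hgexE hos ab).1
    intro i
    exact (hc i).2.2.2 a b ab (defined_of_le_right hA hac (heis i))
      (defined_of_le_right hA hbc (heis i)) hab

end CentralSum

section Max
variable (hA : A.IsGPEA) {γ : E → E → E} (hγ : ∀ a : E, A.IsExoCover a (γ a))
include hA hγ

lemma max_lemma (hCO : A.IsCOGPEA) (Q : Set E)
    (hQsumCl : ∀ {κ : Type u} (f : κ → E), (∀ i, f i ∈ Q) → A.GEXOrthogonal f →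
      ∀ z, A.IsOrthosum f z → z ∈ Q)
    (hQexo : ∀ (π : E → E), A.IsExo π → ∀ q ∈ Q, π q ∈ Q) :
    ∃ k ∈ Q, ∀ q ∈ Q, A.exoLe (γ q) (γ k) := by
  set S : Set (Set E) := {M | M ⊆ Q ∧ ∀ a ∈ M, ∀ b ∈ M, a ≠ b →
    A.exoDisjoint (γ a) (γ b)} with hS
  obtain ⟨M, hM⟩ := zorn_subset S (by
    intro c hcS hchain
    refine ⟨⋃₀ c, ⟨?_, ?_⟩, fun s hs => Set.subset_sUnion_of_mem hs⟩
    · rintro x ⟨m, hm, hxm⟩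
      exact (hcS hm).1 hxm
    · rintro a ⟨m1, hm1, ham⟩ b ⟨m2, hm2, hbm⟩ hab
      rcases hchain.total hm1 hm2 with h | h
      · exact (hcS hm2).2 a (h ham) b hbm hab
      · exact (hcS hm1).2 a ham b (h hbm) hab)
  have hMQ : M ⊆ Q := hM.1.1
  have hMd := hM.1.2
  set f : ↥M → E := fun i => (i : E) with hf
  have hgex : A.GEXOrthogonal f := by
    refine ⟨fun i => γ (i : E), fun i => cover_exo hγ _, ?_, fun i => cover_fix hγ _⟩
    intro i j hij
    exact hMd i i.2 j j.2 (fun h => hij (Subtype.ext h))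
  obtain ⟨k, hk⟩ := hCO.1 f hgex
  have hkQ : k ∈ Q := hQsumCl f (fun i => hMQ i.2) hgex k hk
  refine ⟨k, hkQ, ?_⟩
  have hmemle : ∀ m, m ∈ M → A.le m k := by
    intro m hm
    obtain ⟨t1, ht1⟩ := hk.1 {(⟨m, hm⟩ : ↥M)}
    have h7 := partial_le_sum hk ht1
    rw [fs_singleton hA ht1] at h7
    exact h7
  have hdism : ∀ q', A.exoCompl (γ k) q' = q' →
      ∀ m ∈ M, ∀ x, γ q' (γ m x) = A.zero := by
    intro q' hq'fix m hm x
    have h1 : A.exoLe (γ q') (A.exoCompl (γ k)) :=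
      cover_min hγ (compl_exo hA (cover_exo hγ k)) hq'fix
    have h2 : A.exoLe (γ m) (γ k) := cover_mono hA hγ (hmemle m hm)
    have h3 : γ k (γ m x) = γ m x :=
      exoLe_fix hA (cover_exo hγ k) (cover_exo hγ m) h2 (exo2 (cover_exo hγ m) x)
    have h4 : A.exoCompl (γ k) (γ m x) = A.zero :=
      compl_of_fix hA (cover_exo hγ k) h3
    have h5 : γ q' (γ m x) = γ q' (A.exoCompl (γ k) (γ m x)) := congrFun h1 (γ m x)
    rw [h4] at h5
    rw [h5]
    exact exo_zero hA (cover_exo hγ q')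
  intro q hq
  by_cases hq0 : A.exoCompl (γ k) q = A.zero
  · exact cover_min hγ (cover_exo hγ k) (fix_of_compl_kill hA (cover_exo hγ k) hq0)
  · exfalso
    set q' := A.exoCompl (γ k) q with hq'
    have hq'Q : q' ∈ Q := hQexo _ (compl_exo hA (cover_exo hγ k)) q hq
    have hq'fix : A.exoCompl (γ k) q' = q' :=
      compl_of_kill hA (cover_exo hγ k) (compl_killed hA (cover_exo hγ k) q)
    have hq'M : q' ∉ M := by
      intro hmem
      have h8 := hdism q' hq'fix q' hmem q'
      rw [cover_fix hγ q', cover_fix hγ q'] at h8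
      exact hq0 h8
    have hM' : insert q' M ∈ S := by
      constructor
      · intro x hx
        rcases hx with rfl | hx
        · exact hq'Q
        · exact hMQ hx
      · intro a ha b hb hab
        rcases ha with rfl | ha
        · rcases hb with rfl | hb
          · exact absurd rfl hab
          · intro x; exact hdism q' hq'fix b hb x
        · rcases hb with rfl | hb
          · intro x
            rw [commute hA (cover_exo hγ a) (cover_exo hγ q') x]
            exact hdism q' hq'fix a ha x
          · exact hMd a ha b hb hab
    have hsub : insert q' M ⊆ M := hM.2 hM' (Set.subset_insert q' M)
    exact hq'M (hsub (Set.mem_insert q' M))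

end Max

end GPEAproof

open GPEApaper PartialAlg in
/-- Theorem 8.1 (fundamental decomposition theorem): for a TD subset K of a
COGPEA E there exist unique pairwise disjoint π₁, π₂, π₃ ∈ ΓEX(E), namely
π₁ = γ_K̃, π₂ = γ_K ∧ (γ_K̃)′, π₃ = (γ_K)′, such that π₁ ∨ π₂ ∨ π₃ = 1
(so E = π₁(E) ⊕ π₂(E) ⊕ π₃(E)), π₁ is type-K, π₂ is locally type-K but
properly non-K, and π₃ is purely non-K. -/
theorem stmt_19 {E : Type u} (A : PartialAlg E) (hA : A.IsGPEA)
    (hCO : A.IsCOGPEA) (γ : E → E → E)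
    (hγ : ∀ a : E, A.IsExoCover a (γ a))
    (K : Set E) (hK : A.IsTD γ K)
    (gK : E → E) (hgK : A.IsExoLUB {π : E → E | ∃ k ∈ K, π = γ k} gK)
    (gKt : E → E)
    (hgKt : A.IsExoLUB {π : E → E | ∃ k, (k ∈ K ∧ A.Central k) ∧ π = γ k} gKt) :
    A.TDDecompProp γ K gK gKt gKt (gK ∘ A.exoCompl gKt) (A.exoCompl gK) ∧
    ∀ q₁ q₂ q₃ : E → E, A.TDDecompProp γ K gK gKt q₁ q₂ q₃ →
      q₁ = gKt ∧ q₂ = gK ∘ A.exoCompl gKt ∧ q₃ = A.exoCompl gK := by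
  open GPEAproof in
  have hgKexo : A.IsExo gK := hgK.1
  have hgKtexo : A.IsExo gKt := hgKt.1
  have hcgK : A.IsExo (A.exoCompl gK) := compl_exo hA hgKexo
  have hcgKt : A.IsExo (A.exoCompl gKt) := compl_exo hA hgKtexo
  have hπ₂ : A.IsExo (gK ∘ A.exoCompl gKt) := comp_exo hA hgKexo hcgKt
  have hle : A.exoLe gKt gK := by
    apply hgKt.2.2 gK hgKexo
    rintro π' ⟨kk, hkk, rfl⟩
    exact hgK.2.1 _ ⟨kk, hkk.1, rfl⟩
  have kk1 : ∀ x, gKt (gK x) = gKt x := fun x => (congrFun hle x).symm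
  have kk2 : ∀ x, gK (gKt x) = gKt x := fun x => by
    rw [commute hA hgKexo hgKtexo x, kk1 x]
  have kk3 : ∀ x, gKt (A.exoCompl gK x) = A.zero := fun x =>
    kill_of_exoLe hA hgKexo hgKtexo hle x
  have kk4 : ∀ x, A.exoCompl gKt (A.exoCompl gK x) = A.exoCompl gK x := fun x =>
    compl_of_kill hA hgKtexo (kk3 x)
  have kk5 : ∀ x, gK (A.exoCompl gK x) = A.zero := fun x => compl_killed hA hgKexo x
  have kk6 : ∀ x, A.exoCompl gK (gK x) = A.zero := fun x =>
    compl_of_fix hA hgKexo (exo2 hgKexo x)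
  have kk7 : ∀ x, A.exoCompl gKt (gKt x) = A.zero := fun x =>
    compl_of_fix hA hgKtexo (exo2 hgKtexo x)
  have kk8 : ∀ x, gKt (A.exoCompl gKt x) = A.zero := compl_killed hA hgKtexo
  -- closure properties of K and K̃
  have hKsum : ∀ {κ : Type u} (f : κ → E), (∀ i, f i ∈ K) → A.GEXOrthogonal f →
      ∀ z, A.IsOrthosum f z → z ∈ K := by
    intro κ f hf hgex z hz
    rw [hK.1]
    exact ⟨κ, f, hf, hgex, hz⟩
  have hKexo : ∀ (π' : E → E), A.IsExo π' → ∀ q ∈ K, π' q ∈ K := by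
    intro π' hπ' q hq
    rw [hK.2]
    exact ⟨π' q, q, hq, exo_apply_eq_cover hA hγ hπ' q⟩
  set Kt : Set E := {x | x ∈ K ∧ A.Central x} with hKtdef
  have hKtsum : ∀ {κ : Type u} (f : κ → E), (∀ i, f i ∈ Kt) → A.GEXOrthogonal f →
      ∀ z, A.IsOrthosum f z → z ∈ Kt := by
    intro κ f hf hgex z hz
    refine ⟨hKsum f (fun i => (hf i).1) hgex z hz, ?_⟩
    obtain ⟨πf, hexo, hdis, hfix⟩ := hgex
    exact central_orthosum hA hexo hdis hfix hCO (fun i => (hf i).2) hz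
  have hKtexo : ∀ (π' : E → E), A.IsExo π' → ∀ q ∈ Kt, π' q ∈ Kt :=
    fun π' hπ' q hq => ⟨hKexo π' hπ' q hq.1, central_exo hA hq.2 hπ'⟩
  obtain ⟨k₀, hk₀K, hk₀max⟩ := max_lemma hA hγ hCO K hKsum hKexo
  obtain ⟨kt₀, hkt₀K, hkt₀max⟩ := max_lemma hA hγ hCO Kt hKtsum hKtexo
  have gKeq : gK = γ k₀ := by
    apply exoLe_antisymm hA (cover_exo hγ k₀) hgKexo
    · apply hgK.2.2 _ (cover_exo hγ k₀)
      rintro π' ⟨kk, hkk, rfl⟩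
      exact hk₀max kk hkk
    · exact hgK.2.1 _ ⟨k₀, hk₀K, rfl⟩
  have gKteq : gKt = γ kt₀ := by
    apply exoLe_antisymm hA (cover_exo hγ kt₀) hgKtexo
    · apply hgKt.2.2 _ (cover_exo hγ kt₀)
      rintro π' ⟨kk, hkk, rfl⟩
      exact hkt₀max kk hkk
    · exact hgKt.2.1 _ ⟨kt₀, hkt₀K, rfl⟩
  constructor
  · refine ⟨hgKtexo, hπ₂, hcgK, ?_, ?_, ?_, ?_, ?_, ?_, ?_, ?_, ?_⟩
    · -- disjoint π₁ π₂
      intro x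
      show gKt (gK (A.exoCompl gKt x)) = A.zero
      rw [kk1 _]
      exact kk8 x
    · -- disjoint π₁ π₃
      exact fun x => kk3 x
    · -- disjoint π₂ π₃
      intro x
      show gK (A.exoCompl gKt (A.exoCompl gK x)) = A.zero
      rw [kk4 x]
      exact kk5 x
    · -- supremum is the identity
      have hstep2 : A.exoCompl (gK ∘ A.exoCompl gKt) ∘
          A.exoCompl (A.exoCompl gK) = gKt := by
        rw [compl_compl hA hgKexo]
        funext x
        show A.exoCompl (gK ∘ A.exoCompl gKt) (gK x) = gKt x
        have hfx : (gK ∘ A.exoCompl gKt) (gK x) = A.exoCompl gKt (gK x) := by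
          show gK (A.exoCompl gKt (gK x)) = A.exoCompl gKt (gK x)
          rw [commute hA hcgKt hgKexo x]
          exact exo2 hgKexo (A.exoCompl gKt x)
        have h1 := compl_R hA hπ₂ (gK x)
        rw [hfx] at h1
        have h2 := compl_R' hA hgKtexo (gK x)
        have h3 := lcan hA h1 h2
        rw [h3, kk1 x]
      show A.exoCompl (A.exoCompl gKt ∘
        A.exoCompl (A.exoSup (gK ∘ A.exoCompl gKt) (A.exoCompl gK))) = id
      have e1 : A.exoSup (gK ∘ A.exoCompl gKt) (A.exoCompl gK) = A.exoCompl gKt := by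
        show A.exoCompl (A.exoCompl (gK ∘ A.exoCompl gKt) ∘
          A.exoCompl (A.exoCompl gK)) = A.exoCompl gKt
        rw [hstep2]
      rw [e1, compl_compl hA hgKtexo]
      have e2 : A.exoCompl gKt ∘ gKt = fun _ => A.zero := by
        funext x; exact kk7 x
      rw [e2]
      funext x
      show A.rdiv A.zero x = x
      have h3 : A.R A.zero (A.rdiv A.zero x) x := rdiv_spec hA ⟨x, zadd hA x⟩
      exact lcan hA h3 (zadd hA x)
    · -- direct sum decomposition
      intro a
      have hd1 := compl_R hA hgKtexo a
      have hd2 := compl_R hA hgKexo (A.exoCompl gKt a)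
      have hswap : A.exoCompl gK (A.exoCompl gKt a) = A.exoCompl gK a := by
        rw [commute hA hcgK hcgKt a]
        exact kk4 a
      rw [hswap] at hd2
      obtain ⟨m, hm1, hm2⟩ := assoc2 hA hd2 hd1
      refine ⟨(gKt a, gK (A.exoCompl gKt a), A.exoCompl gK a),
        ⟨⟨a, rfl⟩, ⟨a, rfl⟩, ⟨a, rfl⟩, m, hm1, hm2⟩, ?_⟩
      rintro ⟨x₁, x₂, x₃⟩ ⟨⟨u₁, rfl⟩, ⟨u₂, rfl⟩, ⟨u₃, rfl⟩, m', hm'1, hm'2⟩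
      have p1 : gKt (gKt u₁) = gKt u₁ := exo2 hgKtexo u₁
      have p2 : gKt ((gK ∘ A.exoCompl gKt) u₂) = A.zero := by
        show gKt (gK (A.exoCompl gKt u₂)) = A.zero
        rw [kk1 _]; exact kk8 u₂
      have p3 : gKt (A.exoCompl gK u₃) = A.zero := kk3 u₃
      have q1 : (gK ∘ A.exoCompl gKt) (gKt u₁) = A.zero := by
        show gK (A.exoCompl gKt (gKt u₁)) = A.zero
        rw [kk7 u₁]; exact exo_zero hA hgKexo
      have q2 : (gK ∘ A.exoCompl gKt) ((gK ∘ A.exoCompl gKt) u₂) =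
          (gK ∘ A.exoCompl gKt) u₂ := exo2 hπ₂ u₂
      have q3 : (gK ∘ A.exoCompl gKt) (A.exoCompl gK u₃) = A.zero := by
        show gK (A.exoCompl gKt (A.exoCompl gK u₃)) = A.zero
        rw [kk4 u₃]; exact kk5 u₃
      have r1 : A.exoCompl gK (gKt u₁) = A.zero :=
        compl_of_fix hA hgKexo (kk2 u₁)
      have r2 : A.exoCompl gK ((gK ∘ A.exoCompl gKt) u₂) = A.zero :=
        compl_of_fix hA hgKexo (exo2 hgKexo (A.exoCompl gKt u₂))
      have r3 : A.exoCompl gK (A.exoCompl gK u₃) = A.exoCompl gK u₃ :=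
        exo2 hcgK u₃
      have h1 := exo1 hgKtexo hm'1
      rw [p1, p2] at h1
      have e_m1 : gKt m' = gKt u₁ := (fnn hA (addz hA (gKt u₁)) h1).symm
      have h2 := exo1 hgKtexo hm'2
      rw [e_m1, p3] at h2
      have ex1 : gKt u₁ = gKt a := fnn hA (addz hA (gKt u₁)) h2
      have h3 := exo1 hπ₂ hm'1
      rw [q1, q2] at h3
      have e_m2 : (gK ∘ A.exoCompl gKt) m' = (gK ∘ A.exoCompl gKt) u₂ :=
        (lcan hA h3 (zadd hA ((gK ∘ A.exoCompl gKt) m'))).symm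
      have h4 := exo1 hπ₂ hm'2
      rw [e_m2, q3] at h4
      have ex2 : (gK ∘ A.exoCompl gKt) u₂ = (gK ∘ A.exoCompl gKt) a :=
        fnn hA (addz hA ((gK ∘ A.exoCompl gKt) u₂)) h4
      have h5 := exo1 hcgK hm'1
      rw [r1, r2] at h5
      have e_m3 : A.exoCompl gK m' = A.zero :=
        (fnn hA (zadd hA A.zero) h5).symm
      have h6 := exo1 hcgK hm'2
      rw [e_m3, r3] at h6
      have ex3 : A.exoCompl gK u₃ = A.exoCompl gK a :=
        lcan hA h6 (zadd hA (A.exoCompl gK a)) |>.symm |>.symm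
      exact Prod.ext ex1 (Prod.ext ex2 ex3)
    · -- π₁ is type-K
      exact ⟨kt₀, hkt₀K, gKteq⟩
    · -- π₂ is locally type-K
      refine ⟨A.exoCompl gKt k₀, hKexo _ hcgKt k₀ hk₀K, ?_⟩
      rw [cover_comp hA hγ hcgKt k₀, ← gKeq]
      funext x
      exact commute hA hgKexo hcgKt x
    · -- π₂ properly non-K
      intro x
      show gK (A.exoCompl gKt (gKt x)) = A.zero
      rw [kk7 x]; exact exo_zero hA hgKexo
    · -- π₃ purely non-K
      exact fun x => kk6 x
  · -- uniqueness
    rintro q₁ q₂ q₃ ⟨hq1e, hq2e, hq3e, hd12', hd13', hd23', hsup', hdec',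
      ⟨kt, hktK, hq1γ⟩, ⟨kq, hkqK, hq2γ⟩, hq2t, hq3K⟩
    have hcq1 : A.IsExo (A.exoCompl q₁) := compl_exo hA hq1e
    have hcq2 : A.IsExo (A.exoCompl q₂) := compl_exo hA hq2e
    have hcq3 : A.IsExo (A.exoCompl q₃) := compl_exo hA hq3e
    have hY : A.IsExo (A.exoCompl q₂ ∘ A.exoCompl q₃) := comp_exo hA hcq2 hcq3
    have hZzero : ∀ x, A.exoCompl q₁ (A.exoCompl q₂ (A.exoCompl q₃ x)) = A.zero := by
      intro x
      have hZ : A.IsExo (A.exoCompl q₁ ∘ (A.exoCompl q₂ ∘ A.exoCompl q₃)) :=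
        comp_exo hA hcq1 hY
      have hsup'' : A.exoCompl (A.exoCompl q₁ ∘
          (A.exoCompl q₂ ∘ A.exoCompl q₃)) = id := by
        have e1 : A.exoCompl (A.exoSup q₂ q₃) = A.exoCompl q₂ ∘ A.exoCompl q₃ :=
          compl_compl hA hY
        rw [← e1]
        exact hsup'
      have h0 := compl_R hA hZ x
      rw [hsup''] at h0
      exact cancel_self_left hA h0
    have hcom : ∀ x, A.exoCompl q₃ (A.exoCompl q₂ (A.exoCompl q₁ x)) = A.zero := by
      intro x
      calc A.exoCompl q₃ (A.exoCompl q₂ (A.exoCompl q₁ x))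
          = A.exoCompl q₂ (A.exoCompl q₃ (A.exoCompl q₁ x)) :=
            commute hA hcq3 hcq2 _
        _ = A.exoCompl q₂ (A.exoCompl q₁ (A.exoCompl q₃ x)) := by
            rw [commute hA hcq3 hcq1 x]
        _ = A.exoCompl q₁ (A.exoCompl q₂ (A.exoCompl q₃ x)) :=
            commute hA hcq2 hcq1 _
        _ = A.zero := hZzero x
    have hcom2 : ∀ x, A.exoCompl q₂ (A.exoCompl q₁ (A.exoCompl q₃ x)) = A.zero := by
      intro x
      calc A.exoCompl q₂ (A.exoCompl q₁ (A.exoCompl q₃ x))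
          = A.exoCompl q₁ (A.exoCompl q₂ (A.exoCompl q₃ x)) :=
            commute hA hcq2 hcq1 _
        _ = A.zero := hZzero x
    have hcom3 : ∀ x, A.exoCompl q₃ (A.exoCompl q₁ (A.exoCompl q₂ x)) = A.zero := by
      intro x
      calc A.exoCompl q₃ (A.exoCompl q₁ (A.exoCompl q₂ x))
          = A.exoCompl q₁ (A.exoCompl q₃ (A.exoCompl q₂ x)) :=
            commute hA hcq3 hcq1 _
        _ = A.exoCompl q₁ (A.exoCompl q₂ (A.exoCompl q₃ x)) := by
            rw [commute hA hcq3 hcq2 x]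
        _ = A.zero := hZzero x
    have hq1gKt : A.exoLe q₁ gKt := by
      rw [hq1γ]; exact hgKt.2.1 _ ⟨kt, hktK, rfl⟩
    have hq2gK : A.exoLe q₂ gK := by
      rw [hq2γ]; exact hgK.2.1 _ ⟨kq, hkqK, rfl⟩
    have ha2 : A.exoLe gKt q₁ := by
      apply exoLe_of_kill hA hq1e hgKtexo
      intro x
      have hy2 := compl_R hA hq2e (A.exoCompl q₁ x)
      have hfixq3 : q₃ (A.exoCompl q₂ (A.exoCompl q₁ x)) =
          A.exoCompl q₂ (A.exoCompl q₁ x) :=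
        fix_of_compl_kill hA hq3e (hcom x)
      have hz1 : gKt (q₂ (A.exoCompl q₁ x)) = A.zero := by
        rw [commute hA hgKtexo hq2e (A.exoCompl q₁ x)]
        exact hq2t (A.exoCompl q₁ x)
      have hz2 : gKt (A.exoCompl q₂ (A.exoCompl q₁ x)) = A.zero := by
        rw [← hfixq3]
        rw [show gKt (q₃ (A.exoCompl q₂ (A.exoCompl q₁ x))) =
          q₃ (gKt (A.exoCompl q₂ (A.exoCompl q₁ x))) from
          commute hA hgKtexo hq3e _]
        rw [← kk1 (A.exoCompl q₂ (A.exoCompl q₁ x))]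
        rw [show q₃ (gKt (gK (A.exoCompl q₂ (A.exoCompl q₁ x)))) =
          gKt (q₃ (gK (A.exoCompl q₂ (A.exoCompl q₁ x)))) from
          (commute hA hgKtexo hq3e _).symm]
        rw [hq3K _]
        exact exo_zero hA hgKtexo
      have h8 := exo1 hgKtexo hy2
      rw [hz1, hz2] at h8
      exact (fnn hA (zadd hA A.zero) h8).symm
    have eq1 : q₁ = gKt := exoLe_antisymm hA hgKtexo hq1e hq1gKt ha2
    have hb1 : A.exoLe q₃ (A.exoCompl gK) :=
      exoLe_compl_of_disjoint hA hgKexo hq3e hq3K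
    have hb2 : A.exoLe (A.exoCompl gK) q₃ := by
      apply exoLe_of_kill hA hq3e hcgK
      intro x
      have hy1 := compl_R hA hq1e (A.exoCompl q₃ x)
      have hfixq2 : q₂ (A.exoCompl q₁ (A.exoCompl q₃ x)) =
          A.exoCompl q₁ (A.exoCompl q₃ x) :=
        fix_of_compl_kill hA hq2e (hcom2 x)
      have hz1 : A.exoCompl gK (q₁ (A.exoCompl q₃ x)) = A.zero := by
        rw [eq1]
        exact compl_of_fix hA hgKexo (kk2 (A.exoCompl q₃ x))
      have hz2 : A.exoCompl gK (A.exoCompl q₁ (A.exoCompl q₃ x)) = A.zero := by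
        rw [← hfixq2]
        have h9 : q₂ (A.exoCompl q₁ (A.exoCompl q₃ x)) =
            q₂ (gK (A.exoCompl q₁ (A.exoCompl q₃ x))) := congrFun hq2gK _
        rw [h9, commute hA hcgK hq2e (gK (A.exoCompl q₁ (A.exoCompl q₃ x))),
          kk6 (A.exoCompl q₁ (A.exoCompl q₃ x)), exo_zero hA hq2e]
      have h8 := exo1 hcgK hy1
      rw [hz1, hz2] at h8
      exact (fnn hA (zadd hA A.zero) h8).symm
    have eq3 : q₃ = A.exoCompl gK := exoLe_antisymm hA hcgK hq3e hb1 hb2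
    have hc1 : A.exoLe q₂ (gK ∘ A.exoCompl gKt) := by
      funext x
      show q₂ x = q₂ (gK (A.exoCompl gKt x))
      have s1 : ∀ z, q₂ (gK z) = q₂ z := fun z => (congrFun hq2gK z).symm
      have s2 : ∀ z, q₂ (A.exoCompl gKt z) = q₂ z := by
        intro z
        have hdz := compl_R hA hgKtexo z
        have h8 := exo1 hq2e hdz
        rw [hq2t z] at h8
        exact lcan hA h8 (zadd hA (q₂ z))
      rw [s1, s2]
    have hc2 : A.exoLe (gK ∘ A.exoCompl gKt) q₂ := by
      apply exoLe_of_kill hA hq2e hπ₂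
      intro x
      show gK (A.exoCompl gKt (A.exoCompl q₂ x)) = A.zero
      have hy1 := compl_R hA hq1e (A.exoCompl q₂ x)
      have hfixq3 : q₃ (A.exoCompl q₁ (A.exoCompl q₂ x)) =
          A.exoCompl q₁ (A.exoCompl q₂ x) :=
        fix_of_compl_kill hA hq3e (hcom3 x)
      have hz1 : (gK ∘ A.exoCompl gKt) (q₁ (A.exoCompl q₂ x)) = A.zero := by
        show gK (A.exoCompl gKt (q₁ (A.exoCompl q₂ x))) = A.zero
        rw [eq1, kk7 (A.exoCompl q₂ x)]
        exact exo_zero hA hgKexo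
      have hz2 : (gK ∘ A.exoCompl gKt) (A.exoCompl q₁ (A.exoCompl q₂ x)) =
          A.zero := by
        show gK (A.exoCompl gKt (A.exoCompl q₁ (A.exoCompl q₂ x))) = A.zero
        rw [← hfixq3, eq3, kk4 _]
        exact kk5 _
      have h8 := exo1 hπ₂ hy1
      rw [hz1, hz2] at h8
      exact (fnn hA (zadd hA A.zero) h8).symm
    have eq2 : q₂ = gK ∘ A.exoCompl gKt := exoLe_antisymm hA hπ₂ hq2e hc1 hc2
    exact ⟨eq1, eq2, eq3⟩
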